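/- arXiv:1606.01005 — 7 statements merged into one kernel-verified Lean document; each statement's English description precedes it below -/
import Mathlib

section
/- Under Assumptions 1 and 2, for every scalar α > 0 and every k ∈ ℕ, S_k^α = ⋂_{j=0}^{k} (A^j)⁻¹(𝒳 ⊖ R_j^α), where (A^j)⁻¹ denotes the preimage under the j-th matrix power of A. -/
open Matrix Set Pointwise

namespace RPIScaling

/-- A C-set in `ℝ^p`: convex, compact, containing the origin in its interior. -/
def IsCSet {p : ℕ} (S : Set (Fin p → ℝ)) : Prop :=
  Convex ℝ S ∧ IsCompact S ∧ (0 : Fin p → ℝ) ∈ interior S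

/-- Pontryagin difference `U ⊖ V`. -/
def pontryaginDiff {p : ℕ} (U V : Set (Fin p → ℝ)) : Set (Fin p → ℝ) :=
  {x | ∀ v ∈ V, x + v ∈ U}

/-- Upper-left `r × r` block of `A`. -/
def blockA11 {n r : ℕ} (hrn : r ≤ n) (A : Matrix (Fin n) (Fin n) ℝ) :
    Matrix (Fin r) (Fin r) ℝ :=
  A.submatrix (Fin.castLE hrn) (Fin.castLE hrn)

/-- Upper `r × m` block of `E`. -/
def blockE1 {n m r : ℕ} (hrn : r ≤ n) (E : Matrix (Fin n) (Fin m) ℝ) :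
    Matrix (Fin r) (Fin m) ℝ :=
  E.submatrix (Fin.castLE hrn) id

/-- Lower-right `(n-r) × (n-r)` block of `A`. -/
def blockA22 {n : ℕ} (r : ℕ) (A : Matrix (Fin n) (Fin n) ℝ) :
    Matrix (Fin (n - r)) (Fin (n - r)) ℝ :=
  A.submatrix (fun i => ⟨r + i.1, by have h := i.2; omega⟩)
    (fun i => ⟨r + i.1, by have h := i.2; omega⟩)

/-- The controllability matrix `[E₁, A₁₁E₁, …, A₁₁^{r-1}E₁]` of the pair `(A₁₁, E₁)`. -/
def controllabilityMatrix {n m r : ℕ} (hrn : r ≤ n) (A : Matrix (Fin n) (Fin n) ℝ)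
    (E : Matrix (Fin n) (Fin m) ℝ) : Matrix (Fin r) (Fin r × Fin m) ℝ :=
  Matrix.of fun i p => ((blockA11 hrn A) ^ (p.1 : ℕ) * blockE1 hrn E) i p.2

/-- Assumption 1: block structure of `A` and `E`, controllability of `(A₁₁, E₁)`,
and `𝒳`, `𝒟*` are C-sets. -/
structure Assumption1 {n m r : ℕ} (hrn : r ≤ n) (A : Matrix (Fin n) (Fin n) ℝ)
    (E : Matrix (Fin n) (Fin m) ℝ) (X : Set (Fin n → ℝ)) (D : Set (Fin m → ℝ)) : Prop where
  hn : 0 < n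
  hm : 0 < m
  hr : 0 < r
  lowerLeftA : ∀ i j : Fin n, r ≤ (i : ℕ) → (j : ℕ) < r → A i j = 0
  lowerE : ∀ i : Fin n, r ≤ (i : ℕ) → ∀ j, E i j = 0
  controllable : (controllabilityMatrix hrn A E).rank = r
  hX : IsCSet X
  hD : IsCSet D

/-- All complex eigenvalues of `M` have modulus `< 1`. -/
def StrictlyStable {p : ℕ} (M : Matrix (Fin p) (Fin p) ℝ) : Prop :=
  ∀ μ ∈ spectrum ℂ (M.map (algebraMap ℝ ℂ)), ‖μ‖ < 1

/-- All complex eigenvalues of `M` have modulus `≤ 1`. -/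
def Stable {p : ℕ} (M : Matrix (Fin p) (Fin p) ℝ) : Prop :=
  ∀ μ ∈ spectrum ℂ (M.map (algebraMap ℝ ℂ)), ‖μ‖ ≤ 1

/-- Assumption 2: the eigenvalues of `A₁₁` and `A₂₂` are strictly stable. -/
def Assumption2 {n r : ℕ} (hrn : r ≤ n) (A : Matrix (Fin n) (Fin n) ℝ) : Prop :=
  StrictlyStable (blockA11 hrn A) ∧ StrictlyStable (blockA22 r A)

/-- Assumption 2': the eigenvalues of `A₂₂` are stable. -/
def Assumption2' {n : ℕ} (r : ℕ) (A : Matrix (Fin n) (Fin n) ℝ) : Prop :=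
  Stable (blockA22 r A)

/-- `P` is robust positively invariant for disturbance scaling `α`. -/
def IsRPI {n m : ℕ} (A : Matrix (Fin n) (Fin n) ℝ) (E : Matrix (Fin n) (Fin m) ℝ)
    (X : Set (Fin n → ℝ)) (D : Set (Fin m → ℝ)) (α : ℝ) (P : Set (Fin n → ℝ)) : Prop :=
  P ⊆ X ∧ ∀ x ∈ P, ∀ d ∈ α • D, A.mulVec x + E.mulVec d ∈ P

/-- The maximal RPI set: the union of all RPI sets. -/
def Pmax {n m : ℕ} (A : Matrix (Fin n) (Fin n) ℝ) (E : Matrix (Fin n) (Fin m) ℝ)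
    (X : Set (Fin n → ℝ)) (D : Set (Fin m → ℝ)) (α : ℝ) : Set (Fin n → ℝ) :=
  ⋃₀ {P | IsRPI A E X D α P}

/-- The minimal RPI set: the intersection of all nonempty RPI sets together with the MRPI set. -/
def Pmin {n m : ℕ} (A : Matrix (Fin n) (Fin n) ℝ) (E : Matrix (Fin n) (Fin m) ℝ)
    (X : Set (Fin n → ℝ)) (D : Set (Fin m → ℝ)) (α : ℝ) : Set (Fin n → ℝ) :=
  ⋂₀ ({P | IsRPI A E X D α P ∧ P.Nonempty} ∪ {Pmax A E X D α})

/-- The sequence `S_k^α`. -/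
def Sseq {n m : ℕ} (A : Matrix (Fin n) (Fin n) ℝ) (E : Matrix (Fin n) (Fin m) ℝ)
    (X : Set (Fin n → ℝ)) (D : Set (Fin m → ℝ)) (α : ℝ) : ℕ → Set (Fin n → ℝ)
  | 0 => X
  | k + 1 => A.mulVec ⁻¹' (pontryaginDiff (Sseq A E X D α k) (E.mulVec '' (α • D))) ∩ X

/-- The limit set `S_∞^α`. -/
def Sinf {n m : ℕ} (A : Matrix (Fin n) (Fin n) ℝ) (E : Matrix (Fin n) (Fin m) ℝ)
    (X : Set (Fin n → ℝ)) (D : Set (Fin m → ℝ)) (α : ℝ) : Set (Fin n → ℝ) :=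
  ⋂ k : ℕ, Sseq A E X D α k

/-- The sequence `R_k^α` of reachable sets. -/
def Rseq {n m : ℕ} (A : Matrix (Fin n) (Fin n) ℝ) (E : Matrix (Fin n) (Fin m) ℝ)
    (D : Set (Fin m → ℝ)) (α : ℝ) : ℕ → Set (Fin n → ℝ)
  | 0 => {0}
  | k + 1 => A.mulVec '' (Rseq A E D α k) + E.mulVec '' (α • D)

/-- The limit set `R_∞^α`. -/
def Rinf {n m : ℕ} (A : Matrix (Fin n) (Fin n) ℝ) (E : Matrix (Fin n) (Fin m) ℝ)
    (D : Set (Fin m → ℝ)) (α : ℝ) : Set (Fin n → ℝ) :=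
  ⋃ k : ℕ, Rseq A E D α k

/-- The critical scaling factor `α*`. -/
noncomputable def alphaStar {n m : ℕ} (A : Matrix (Fin n) (Fin n) ℝ)
    (E : Matrix (Fin n) (Fin m) ℝ) (X : Set (Fin n → ℝ)) (D : Set (Fin m → ℝ)) : ℝ :=
  sSup {α : ℝ | 0 < α ∧ Rinf A E D α ⊆ X}

/-- The sequence `Q_k^α` used to characterize the maximal controlled invariant set. -/
def Qseq {n m : ℕ} (A : Matrix (Fin n) (Fin n) ℝ) (E : Matrix (Fin n) (Fin m) ℝ)
    (X : Set (Fin n → ℝ)) (D : Set (Fin m → ℝ)) (α : ℝ) : ℕ → Set (Fin n → ℝ)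
  | 0 => X
  | k + 1 => A.mulVec ⁻¹' (Qseq A E X D α k + -(E.mulVec '' (α • D))) ∩ X

/-- `C` is controlled invariant for input-constraint scaling `α`. -/
def IsCI {n m : ℕ} (A : Matrix (Fin n) (Fin n) ℝ) (E : Matrix (Fin n) (Fin m) ℝ)
    (X : Set (Fin n → ℝ)) (D : Set (Fin m → ℝ)) (α : ℝ) (C : Set (Fin n → ℝ)) : Prop :=
  C ⊆ X ∧ ∀ x ∈ C, ∃ d ∈ α • D, A.mulVec x + E.mulVec d ∈ C

/-- The maximal controlled invariant set: the union of all CI sets. -/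
def Cmax {n m : ℕ} (A : Matrix (Fin n) (Fin n) ℝ) (E : Matrix (Fin n) (Fin m) ℝ)
    (X : Set (Fin n → ℝ)) (D : Set (Fin m → ℝ)) (α : ℝ) : Set (Fin n → ℝ) :=
  ⋃₀ {C | IsCI A E X D α C}

/-- The Minkowski sum `W = ⨁_{k=0}^{M-1} A₁₁^k E₁ 𝒟*`. -/
def Wset {n m r : ℕ} (hrn : r ≤ n) (A : Matrix (Fin n) (Fin n) ℝ)
    (E : Matrix (Fin n) (Fin m) ℝ) (D : Set (Fin m → ℝ)) (M : ℕ) : Set (Fin r → ℝ) :=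
  {w | ∃ d : Fin M → Fin m → ℝ, (∀ i, d i ∈ D) ∧
    w = ∑ i : Fin M, ((blockA11 hrn A) ^ (i : ℕ) * blockE1 hrn E).mulVec (d i)}

lemma mem_rseq_succ {n m : ℕ} (A : Matrix (Fin n) (Fin n) ℝ) (E : Matrix (Fin n) (Fin m) ℝ)
    (D : Set (Fin m → ℝ)) (α : ℝ) (j : ℕ) (s : Fin n → ℝ) :
    s ∈ Rseq A E D α (j + 1) ↔
      ∃ e ∈ E.mulVec '' (α • D), ∃ ρ ∈ Rseq A E D α j, s = (A ^ j).mulVec e + ρ := by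
  induction j generalizing s with
  | zero =>
    simp only [Rseq, Set.mem_add, Set.mem_image, Set.mem_singleton_iff]
    constructor
    · rintro ⟨a, ⟨x, rfl, rfl⟩, b, hb, rfl⟩
      exact ⟨b, hb, 0, rfl, by simp [Matrix.mulVec_zero]⟩
    · rintro ⟨e, he, ρ, rfl, rfl⟩
      exact ⟨0, ⟨0, rfl, Matrix.mulVec_zero A⟩, e, he, by simp⟩
  | succ j ih =>
    constructor
    · rintro hs
      rw [show j + 1 + 1 = (j + 1) + 1 from rfl] at hs
      simp only [Rseq, Set.mem_add, Set.mem_image] at hs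
      obtain ⟨a, ⟨t, ht, rfl⟩, b, hb, rfl⟩ := hs
      obtain ⟨e, he, ρ, hρ, rfl⟩ := (ih t).mp ht
      refine ⟨e, he, A.mulVec ρ + b, ?_, ?_⟩
      · simp only [Rseq, Set.mem_add]
        exact ⟨A.mulVec ρ, Set.mem_image_of_mem _ hρ, b, hb, rfl⟩
      · rw [Matrix.mulVec_add, pow_succ', Matrix.mulVec_mulVec, add_assoc]
    · rintro ⟨e, he, ρ', hρ', rfl⟩
      simp only [Rseq, Set.mem_add] at hρ' ⊢
      obtain ⟨a, ⟨ρ, hρ, rfl⟩, b, hb, rfl⟩ := hρ'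
      refine ⟨A.mulVec ((A ^ j).mulVec e + ρ), Set.mem_image_of_mem _ ((ih _).mpr
        ⟨e, he, ρ, hρ, rfl⟩), b, hb, ?_⟩
      rw [Matrix.mulVec_add, pow_succ', Matrix.mulVec_mulVec, add_assoc]

theorem sseq_eq_inter_preimages {n m r : ℕ} (hrn : r ≤ n)
    (A : Matrix (Fin n) (Fin n) ℝ) (E : Matrix (Fin n) (Fin m) ℝ)
    (X : Set (Fin n → ℝ)) (D : Set (Fin m → ℝ))
    (hA1 : Assumption1 hrn A E X D) (hA2 : Assumption2 hrn A)
    (α : ℝ) (hα : 0 < α) (k : ℕ) :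
    Sseq A E X D α k =
      ⋂ j ∈ Finset.range (k + 1), (A ^ j).mulVec ⁻¹' pontryaginDiff X (Rseq A E D α j) := by
  induction k with
  | zero =>
    ext x
    simp [Sseq, Rseq, pontryaginDiff, Matrix.one_mulVec]
  | succ k ih =>
    ext x
    simp only [Sseq, Set.mem_inter_iff, Set.mem_preimage, pontryaginDiff, Set.mem_setOf_eq, ih,
      Set.mem_iInter, Finset.mem_range]
    constructor
    · rintro ⟨h1, h2⟩ j hj
      match j with
      | 0 =>
        intro v hv
        simp only [Rseq, Set.mem_singleton_iff] at hv
        subst hv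
        simpa [Matrix.one_mulVec] using h2
      | j + 1 =>
        intro v hv
        obtain ⟨e, he, ρ, hρ, rfl⟩ := (mem_rseq_succ A E D α j v).mp hv
        have := h1 e he j (by omega) ρ hρ
        have key : A ^ (j + 1) *ᵥ x + (A ^ j *ᵥ e + ρ) = A ^ j *ᵥ (A *ᵥ x + e) + ρ := by
          simp [Matrix.mulVec_add, Matrix.mulVec_mulVec, pow_succ, add_assoc]
        rw [key]
        exact this
    · intro h
      refine ⟨fun e he j hj ρ hρ => ?_, ?_⟩
      · have := h (j + 1) (by omega) ((A ^ j).mulVec e + ρ)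
          ((mem_rseq_succ A E D α j _).mpr ⟨e, he, ρ, hρ, rfl⟩)
        have key : A ^ (j + 1) *ᵥ x + (A ^ j *ᵥ e + ρ) = A ^ j *ᵥ (A *ᵥ x + e) + ρ := by
          simp [Matrix.mulVec_add, Matrix.mulVec_mulVec, pow_succ, add_assoc]
        rw [key] at this
        exact this
      · have := h 0 (by omega) 0 (by simp [Rseq])
        simpa [Matrix.one_mulVec] using this

end RPIScaling
end

section
/- Under Assumptions 1 and 2, let η ∈ (0,1), let α > 0 satisfy α < α*, and let δ > 0 satisfy δ ≤ (1−η)(α* − α). Then for every k ∈ ℕ it holds that η • S_k^α ⊆ S_k^{α+δ} ⊆ S_k^α. -/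
open Matrix Set Pointwise

namespace RPIScaling

/-- scaled-set monotonicity for convex sets containing 0 -/
lemma smul_set_mono_of_convex {p : ℕ} {D : Set (Fin p → ℝ)} (hD : Convex ℝ D)
    (h0 : (0 : Fin p → ℝ) ∈ D) {a b : ℝ} (ha : 0 ≤ a) (hab : a ≤ b) :
    a • D ⊆ b • D := by
  rcases eq_or_lt_of_le (ha.trans hab) with hb | hb
  · have : a = 0 := le_antisymm (hab.trans hb.ge) ha
    simp [this, ← hb]
  · rintro x ⟨d, hd, rfl⟩
    refine ⟨(a / b) • d, ?_, ?_⟩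
    · have h := hD h0 hd (a := 1 - a/b) (b := a/b)
        (by have : a/b ≤ 1 := (div_le_one hb).2 hab; linarith)
        (by positivity) (by ring)
      simpa using h
    · show b • (a/b) • d = a • d
      rw [smul_smul, mul_div_cancel₀ _ hb.ne']

/-- Rseq is monotone in the scaling parameter. -/
lemma Rseq_mono {n m : ℕ} (A : Matrix (Fin n) (Fin n) ℝ) (E : Matrix (Fin n) (Fin m) ℝ)
    {D : Set (Fin m → ℝ)} (hD : Convex ℝ D) (h0 : (0 : Fin m → ℝ) ∈ D)
    {a b : ℝ} (ha : 0 ≤ a) (hab : a ≤ b) (k : ℕ) :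
    Rseq A E D a k ⊆ Rseq A E D b k := by
  induction k with
  | zero => exact subset_rfl
  | succ k ih =>
    intro x hx
    rcases Set.mem_add.1 hx with ⟨u, hu, v, hv, rfl⟩
    rcases hu with ⟨y, hy, rfl⟩
    rcases hv with ⟨w, hw, rfl⟩
    exact Set.add_mem_add (Set.mem_image_of_mem _ (ih hy))
      (Set.mem_image_of_mem _ (smul_set_mono_of_convex hD h0 ha hab hw))

/-- scaling of reachable sets. -/
lemma Rseq_smul_mem {n m : ℕ} (A : Matrix (Fin n) (Fin n) ℝ) (E : Matrix (Fin n) (Fin m) ℝ)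
    (D : Set (Fin m → ℝ)) (t b : ℝ) :
    ∀ k, ∀ x ∈ Rseq A E D b k, t • x ∈ Rseq A E D (t * b) k := by
  intro k
  induction k with
  | zero => intro x hx; simp only [Rseq, Set.mem_singleton_iff] at hx ⊢; simp [hx]
  | succ k ih =>
    intro x hx
    rcases Set.mem_add.1 hx with ⟨u, hu, v, hv, rfl⟩
    rcases hu with ⟨y, hy, rfl⟩
    rcases hv with ⟨w, hw, rfl⟩
    rcases hw with ⟨d, hd, rfl⟩
    have h1 : t • (A.mulVec y + E.mulVec (b • d))
        = A.mulVec (t • y) + E.mulVec ((t * b) • d) := by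
      simp [Matrix.mulVec_smul, smul_add, smul_smul]
    rw [h1]
    exact Set.add_mem_add (Set.mem_image_of_mem _ (ih y hy))
      (Set.mem_image_of_mem _ ⟨d, hd, rfl⟩)

theorem sseq_scaling_bounds {n m r : ℕ} (hrn : r ≤ n)
    (A : Matrix (Fin n) (Fin n) ℝ) (E : Matrix (Fin n) (Fin m) ℝ)
    (X : Set (Fin n → ℝ)) (D : Set (Fin m → ℝ))
    (hA1 : Assumption1 hrn A E X D) (hA2 : Assumption2 hrn A)
    (η : ℝ) (hη0 : 0 < η) (hη1 : η < 1)
    (α : ℝ) (hα : 0 < α) (hαlt : α < alphaStar A E X D)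
    (δ : ℝ) (hδ0 : 0 < δ) (hδ : δ ≤ (1 - η) * (alphaStar A E X D - α)) (k : ℕ) :
    η • Sseq A E X D α k ⊆ Sseq A E X D (α + δ) k ∧
      Sseq A E X D (α + δ) k ⊆ Sseq A E X D α k := by
  obtain ⟨hXconv, hXcomp, hX0i⟩ := hA1.hX
  obtain ⟨hDconv, hDcomp, hD0i⟩ := hA1.hD
  have hX0 : (0 : Fin n → ℝ) ∈ X := interior_subset hX0i
  have hD0 : (0 : Fin m → ℝ) ∈ D := interior_subset hD0i
  have hXcl : IsClosed X := hXcomp.isClosed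
  set αs := alphaStar A E X D with hαs
  have hαs0 : 0 < αs := hα.trans hαlt
  set T : Set ℝ := {β : ℝ | 0 < β ∧ Rinf A E D β ⊆ X} with hT
  have hTs : αs = sSup T := by rw [hαs, alphaStar]
  have hTne : T.Nonempty := by
    by_contra h
    rw [Set.not_nonempty_iff_eq_empty] at h
    have : αs = 0 := by rw [hTs, h, Real.sSup_empty]
    linarith
  have hL1' : ∀ β : ℝ, 0 ≤ β → β < αs → ∀ k, Rseq A E D β k ⊆ X := by
    intro β hβ0 hβ k
    obtain ⟨γ, hγT, hβγ⟩ := exists_lt_of_lt_csSup hTne (hTs ▸ hβ)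
    exact (Rseq_mono A E hDconv hD0 hβ0 hβγ.le k).trans
      (fun x hx => hγT.2 (Set.mem_iUnion.2 ⟨k, hx⟩))
  have hL1 : ∀ k, Rseq A E D αs k ⊆ X := by
    intro k x hx
    have htend : Filter.Tendsto (fun nn : ℕ => (1 - 1/((nn:ℝ)+1)) • x)
        Filter.atTop (nhds x) := by
      have h1 : Filter.Tendsto (fun nn : ℕ => (1 - 1/((nn:ℝ)+1)))
          Filter.atTop (nhds (1 - 0)) :=
        tendsto_const_nhds.sub tendsto_one_div_add_atTop_nhds_zero_nat
      have h2 := h1.smul_const x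
      simpa using h2
    refine hXcl.mem_of_tendsto htend (Filter.Eventually.of_forall fun nn => ?_)
    have hpos : (0:ℝ) < 1/((nn:ℝ)+1) := by positivity
    have hle : (1:ℝ)/((nn:ℝ)+1) ≤ 1 := by
      rw [div_le_one (by positivity)]; simp
    have hmem := Rseq_smul_mem A E D (1 - 1/((nn:ℝ)+1)) αs k x hx
    exact hL1' _ (by nlinarith) (by nlinarith) k hmem
  have hL2 : ∀ k j, Rseq A E D αs j ⊆ Sseq A E X D αs k := by
    intro k
    induction k with
    | zero => intro j; exact hL1 j
    | succ k ih =>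
      intro j x hx
      simp only [Sseq, Set.mem_inter_iff, Set.mem_preimage, pontryaginDiff,
        Set.mem_setOf_eq]
      refine ⟨?_, hL1 j hx⟩
      rintro v ⟨w, hw, rfl⟩
      exact ih (j+1) (Set.add_mem_add (Set.mem_image_of_mem _ hx)
        (Set.mem_image_of_mem _ hw))
  have hkey : α + δ ≤ η * α + (1-η) * αs := by nlinarith
  have hsplit : ∀ e ∈ (α + δ) • D, ∃ d ∈ α • D, ∃ w ∈ αs • D,
      e = η • d + (1-η) • w := by
    intro e he
    have h1 : e ∈ (η * α + (1-η) * αs) • D :=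
      smul_set_mono_of_convex hDconv hD0 (by positivity) hkey he
    rw [hDconv.add_smul (by positivity) (by nlinarith)] at h1
    rcases Set.mem_add.1 h1 with ⟨u, hu, v, hv, rfl⟩
    rw [← smul_smul] at hu hv
    rcases hu with ⟨d, hd, rfl⟩
    rcases hv with ⟨w, hw, rfl⟩
    exact ⟨d, hd, w, hw, rfl⟩
  have hmono : ∀ k, Sseq A E X D (α+δ) k ⊆ Sseq A E X D α k := by
    intro k
    induction k with
    | zero => exact subset_rfl
    | succ k ih =>
      intro x hx
      simp only [Sseq, Set.mem_inter_iff, Set.mem_preimage, pontryaginDiff,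
        Set.mem_setOf_eq] at hx ⊢
      refine ⟨?_, hx.2⟩
      rintro v ⟨w, hw, rfl⟩
      have hw' : w ∈ (α+δ) • D :=
        smul_set_mono_of_convex hDconv hD0 hα.le (by linarith) hw
      exact ih (hx.1 _ ⟨w, hw', rfl⟩)
  have hmain : ∀ k, ∀ x ∈ Sseq A E X D α k, ∀ z ∈ Sseq A E X D αs k,
      η • x + (1-η) • z ∈ Sseq A E X D (α+δ) k := by
    intro k
    induction k with
    | zero =>
      intro x hx z hz
      exact hXconv hx hz hη0.le (by linarith) (by ring)
    | succ k ih =>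
      intro x hx z hz
      simp only [Sseq, Set.mem_inter_iff, Set.mem_preimage, pontryaginDiff,
        Set.mem_setOf_eq] at hx hz ⊢
      refine ⟨?_, hXconv hx.2 hz.2 hη0.le (by linarith) (by ring)⟩
      rintro v ⟨e, he, rfl⟩
      obtain ⟨d, hd, w, hw, rfl⟩ := hsplit e he
      have h1 : A.mulVec (η • x + (1-η) • z) + E.mulVec (η • d + (1-η) • w)
          = η • (A.mulVec x + E.mulVec d) + (1-η) • (A.mulVec z + E.mulVec w) := by
        simp only [Matrix.mulVec_add, Matrix.mulVec_smul, smul_add]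
        abel
      rw [h1]
      exact ih _ (hx.1 _ ⟨d, hd, rfl⟩) _ (hz.1 _ ⟨w, hw, rfl⟩)
  refine ⟨?_, hmono k⟩
  rintro y ⟨x, hx, rfl⟩
  have h0S : (0 : Fin n → ℝ) ∈ Sseq A E X D αs k := hL2 k 0 (by simp [Rseq])
  have h := hmain k x hx 0 h0S
  simpa using h

end RPIScaling
end

section
/- Under Assumptions 1 and 2, the critical scaling factor α* is well-defined and finite: the set {α > 0 | R_∞^α ⊆ 𝒳} is nonempty and bounded above, so that 0 < α* < ∞. -/
open Matrix Set Pointwise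

namespace RPIScaling

/-! ### Auxiliary lemmas -/

attribute [local instance 2000] Matrix.linftyOpNormedAddCommGroup
attribute [local instance 2000] Matrix.linftyOpNormedRing
attribute [local instance 2000] Matrix.linftyOpNormedAlgebra

open Polynomial Filter in
lemma aux_spec_iff_root {p : ℕ} (M : Matrix (Fin p) (Fin p) ℂ) (μ : ℂ) :
    μ ∈ spectrum ℂ M ↔ M.charpoly.IsRoot μ := by
  rw [spectrum.mem_iff, Matrix.isUnit_iff_isUnit_det, isUnit_iff_ne_zero, not_not,
    Polynomial.IsRoot, Matrix.charpoly, ← Polynomial.coe_evalRingHom, RingHom.map_det]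
  have : (algebraMap ℂ (Matrix (Fin p) (Fin p) ℂ)) μ - M
      = (evalRingHom μ).mapMatrix M.charmatrix := by
    ext i j
    by_cases h : i = j <;>
      simp [h, Matrix.charmatrix_apply, Matrix.algebraMap_eq_diagonal, Matrix.diagonal_apply,
        Matrix.one_apply]
  rw [this]

lemma aux_charpoly_block {n r : ℕ} (hrn : r ≤ n) (A : Matrix (Fin n) (Fin n) ℝ)
    (hlow : ∀ i j : Fin n, r ≤ (i : ℕ) → (j : ℕ) < r → A i j = 0) :
    (A.map (algebraMap ℝ ℂ)).charpoly =
      ((blockA11 hrn A).map (algebraMap ℝ ℂ)).charpoly *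
        ((blockA22 r A).map (algebraMap ℝ ℂ)).charpoly := by
  set c := algebraMap ℝ ℂ
  have hnr : r + (n - r) = n := by omega
  let e : Fin r ⊕ Fin (n - r) ≃ Fin n := finSumFinEquiv.trans (finCongr hnr)
  have hel : ∀ i : Fin r, e (Sum.inl i) = Fin.castLE hrn i := fun i => Fin.ext (by simp [e])
  have her : ∀ j : Fin (n - r), ((e (Sum.inr j)) : ℕ) = r + j := fun j => by simp [e]
  have key : (A.map c).submatrix e e =
      fromBlocks ((blockA11 hrn A).map c)
        (Matrix.of fun i j => c (A (e (Sum.inl i)) (e (Sum.inr j)))) 0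
        ((blockA22 r A).map c) := by
    ext i j
    cases i with
    | inl i =>
      cases j with
      | inl j => simp [hel, blockA11]
      | inr j => simp
    | inr i =>
      cases j with
      | inl j =>
        have : A (e (Sum.inr i)) (e (Sum.inl j)) = 0 :=
          hlow _ _ (by rw [her]; omega) (by rw [hel]; simp [Fin.castLE])
        simp [this]
      | inr j =>
        have h1 : e (Sum.inr i) = (⟨r + i.1, by have := i.2; omega⟩ : Fin n) :=
          Fin.ext (by rw [her])
        have h2 : e (Sum.inr j) = (⟨r + j.1, by have := j.2; omega⟩ : Fin n) :=
          Fin.ext (by rw [her])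
        simp [h1, h2, blockA22]
  have h3 : ((A.map c).submatrix e e).charpoly = (A.map c).charpoly := by
    have := Matrix.charpoly_reindex e.symm (A.map c)
    simpa [Matrix.reindex_apply] using this
  rw [← h3, key, Matrix.charpoly_fromBlocks_zero₂₁]

lemma aux_norm_map_complex {p q : ℕ} (N : Matrix (Fin p) (Fin q) ℝ) :
    ‖N.map (algebraMap ℝ ℂ)‖ = ‖N‖ := by
  simp only [← coe_nnnorm]
  congr 1
  rw [Matrix.linfty_opNNNorm_def, Matrix.linfty_opNNNorm_def]
  congr 1
  ext i
  congr 1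
  simp [Complex.nnnorm_real, Matrix.map_apply, Complex.coe_algebraMap]

open Filter in
lemma aux_exists_pow_norm_lt_one {p : ℕ} (hp : 0 < p) (M : Matrix (Fin p) (Fin p) ℝ)
    (hM : StrictlyStable M) :
    ∃ k : ℕ, 0 < k ∧ ‖M ^ k‖ < 1 := by
  haveI : Nonempty (Fin p) := ⟨⟨0, hp⟩⟩
  set Mc := M.map (algebraMap ℝ ℂ) with hMc
  have hrad : spectralRadius ℂ Mc < 1 := by
    have := spectrum.spectralRadius_lt_of_forall_lt (a := Mc) (r := 1)
      (fun z hz => by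
        have := hM z hz
        rw [← NNReal.coe_lt_coe]
        simpa [coe_nnnorm] using this)
    simpa using this
  have htend := spectrum.pow_nnnorm_pow_one_div_tendsto_nhds_spectralRadius Mc
  have hev : ∀ᶠ k : ℕ in atTop, (‖Mc ^ k‖₊ : ENNReal) ^ (1 / (k : ℝ)) < 1 :=
    htend.eventually_lt_const hrad
  obtain ⟨k, hk1, hk2⟩ := (hev.and (eventually_ge_atTop 1)).exists
  refine ⟨k, hk2, ?_⟩
  have hkne : (k : ℝ) ≠ 0 := by positivity
  have hlt : (‖Mc ^ k‖₊ : ENNReal) < 1 := by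
    have h2 : ((‖Mc ^ k‖₊ : ENNReal) ^ (1 / (k : ℝ))) ^ (k : ℝ) < 1 :=
      ENNReal.rpow_lt_one hk1 (by positivity)
    rwa [← ENNReal.rpow_mul, one_div_mul_cancel hkne, ENNReal.rpow_one] at h2
  have hpow : (M ^ k).map (algebraMap ℝ ℂ) = Mc ^ k := by
    rw [hMc]; simpa [RingHom.mapMatrix_apply] using map_pow ((algebraMap ℝ ℂ).mapMatrix) M k
  have : ‖M ^ k‖ = ‖Mc ^ k‖ := by rw [← hpow, aux_norm_map_complex]
  rw [this]
  exact_mod_cast hlt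

lemma aux_sum_pow_norm_bound {p : ℕ} (hp : 0 < p) (M : Matrix (Fin p) (Fin p) ℝ)
    (hM : StrictlyStable M) :
    ∃ S : ℝ, 0 < S ∧ ∀ k : ℕ, ∑ j ∈ Finset.range k, ‖M ^ j‖ ≤ S := by
  obtain ⟨k₀, hk₀, hqlt⟩ := aux_exists_pow_norm_lt_one hp M hM
  set q : ℝ := max ‖M ^ k₀‖ (1 / 2) with hqdef
  have hq0 : 0 < q := lt_of_lt_of_le (by norm_num) (le_max_right _ _)
  have hq1 : q < 1 := max_lt hqlt (by norm_num)
  have hle : ‖M ^ k₀‖ ≤ q := le_max_left _ _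
  set B : ℝ := (∑ s ∈ Finset.range k₀, ‖M ^ s‖) + 1 with hBdef
  have hB : 0 < B := by positivity
  have hBs : ∀ s, s < k₀ → ‖M ^ s‖ ≤ B := by
    intro s hs
    have h1 : ‖M ^ s‖ ≤ ∑ s ∈ Finset.range k₀, ‖M ^ s‖ :=
      Finset.single_le_sum (fun i _ => norm_nonneg _) (Finset.mem_range.2 hs)
    linarith
  have hj : ∀ j : ℕ, ‖M ^ j‖ ≤ B * q ^ (j / k₀) := by
    intro j
    rcases lt_or_ge j k₀ with h | h
    · rw [Nat.div_eq_of_lt h, pow_zero, mul_one]; exact hBs j h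
    · have ht : 0 < j / k₀ := Nat.div_pos h hk₀
      have hsplit : M ^ j = (M ^ k₀) ^ (j / k₀) * M ^ (j % k₀) := by
        rw [← pow_mul, ← pow_add, Nat.div_add_mod]
      calc ‖M ^ j‖ ≤ ‖(M ^ k₀) ^ (j / k₀)‖ * ‖M ^ (j % k₀)‖ := by
            rw [hsplit]; exact norm_mul_le _ _
        _ ≤ ‖M ^ k₀‖ ^ (j / k₀) * B := by
            apply mul_le_mul (norm_pow_le' _ ht) (hBs _ (Nat.mod_lt _ hk₀)) (norm_nonneg _)
            positivity
        _ ≤ q ^ (j / k₀) * B := by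
            apply mul_le_mul_of_nonneg_right _ hB.le
            exact pow_le_pow_left₀ (norm_nonneg _) hle _
        _ = B * q ^ (j / k₀) := mul_comm _ _
  set ρ : ℝ := q ^ ((1 : ℝ) / k₀) with hρdef
  have hρ0 : 0 < ρ := Real.rpow_pos_of_pos hq0 _
  have hρ1 : ρ < 1 := Real.rpow_lt_one hq0.le hq1 (by positivity)
  have hgeo : ∀ j : ℕ, q ^ (j / k₀) ≤ (1 / q) * ρ ^ j := by
    intro j
    have hexp : (j : ℝ) / k₀ - 1 ≤ ((j / k₀ : ℕ) : ℝ) := by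
      have h1 : j < k₀ * (j / k₀) + k₀ := by
        have := Nat.div_add_mod j k₀
        have := Nat.mod_lt j hk₀
        omega
      have h2 : (j : ℝ) < k₀ * ((j / k₀ : ℕ) : ℝ) + k₀ := by exact_mod_cast h1
      have hk0' : (0 : ℝ) < (k₀ : ℝ) := by exact_mod_cast hk₀
      rw [div_sub_one hk0'.ne', div_le_iff₀ hk0']
      nlinarith
    calc q ^ (j / k₀) = q ^ (((j / k₀ : ℕ) : ℝ)) := (Real.rpow_natCast _ _).symm
      _ ≤ q ^ ((j : ℝ) / k₀ - 1) := Real.rpow_le_rpow_of_exponent_ge hq0 hq1.le hexp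
      _ = (1 / q) * ρ ^ j := by
          have hc : (1:ℝ)/k₀ * (j:ℕ) = (j:ℝ)/k₀ := by ring
          rw [Real.rpow_sub hq0, Real.rpow_one, hρdef, ← Real.rpow_natCast (q ^ ((1:ℝ)/k₀)) j,
            ← Real.rpow_mul hq0.le, hc]
          ring
  have h1ρ : 0 < 1 - ρ := by linarith
  have hSpos : 0 < B * (1 / q) * (1 / (1 - ρ)) + 1 := by
    have h4 : 0 < 1 / (1 - ρ) := by positivity
    have : 0 < B * (1 / q) * (1 / (1 - ρ)) := by positivity
    linarith
  refine ⟨B * (1 / q) * (1 / (1 - ρ)) + 1, hSpos, fun k => ?_⟩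
  have hsum : ∑ j ∈ Finset.range k, ρ ^ j ≤ 1 / (1 - ρ) := by
    rw [geom_sum_eq hρ1.ne]
    rw [show (ρ ^ k - 1) / (ρ - 1) = (1 - ρ ^ k) / (1 - ρ) by rw [← neg_div_neg_eq]; ring_nf]
    gcongr
    have : 0 ≤ ρ ^ k := by positivity
    linarith
  calc ∑ j ∈ Finset.range k, ‖M ^ j‖ ≤ ∑ j ∈ Finset.range k, B * q ^ (j / k₀) :=
        Finset.sum_le_sum fun j _ => hj j
    _ ≤ ∑ j ∈ Finset.range k, B * ((1 / q) * ρ ^ j) :=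
        Finset.sum_le_sum fun j _ => mul_le_mul_of_nonneg_left (hgeo j) hB.le
    _ = B * (1 / q) * ∑ j ∈ Finset.range k, ρ ^ j := by
        rw [Finset.mul_sum]; congr 1; ext j; ring
    _ ≤ B * (1 / q) * (1 / (1 - ρ)) :=
        mul_le_mul_of_nonneg_left hsum (by positivity)
    _ ≤ B * (1 / q) * (1 / (1 - ρ)) + 1 := by linarith

lemma aux_Rseq_bound {n m : ℕ} (A : Matrix (Fin n) (Fin n) ℝ) (E : Matrix (Fin n) (Fin m) ℝ)
    (D : Set (Fin m → ℝ)) (α : ℝ) (hα : 0 ≤ α) (Dbd S : ℝ)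
    (hD : ∀ d ∈ D, ‖d‖ ≤ Dbd) (hDbd : 0 ≤ Dbd)
    (hS : ∀ k : ℕ, ∑ j ∈ Finset.range k, ‖A ^ j‖ ≤ S) :
    ∀ k : ℕ, ∀ x ∈ Rseq A E D α k, ‖x‖ ≤ α * ‖E‖ * Dbd * S := by
  have hS0 : 0 ≤ S := le_trans (by simp) (hS 0)
  have key : ∀ k : ℕ, ∀ x ∈ Rseq A E D α k, ∀ t : ℕ,
      ‖(A ^ t) *ᵥ x‖ ≤ α * ‖E‖ * Dbd * ∑ j ∈ Finset.Ico t (t + k), ‖A ^ j‖ := by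
    intro k
    induction k with
    | zero =>
      intro x hx t
      simp only [Rseq, Set.mem_singleton_iff] at hx
      subst hx
      simp
    | succ k ih =>
      intro x hx t
      rw [show Rseq A E D α (k+1) = A.mulVec '' (Rseq A E D α k) + E.mulVec '' (α • D) from rfl]
        at hx
      obtain ⟨a, ha, b, hb, rfl⟩ := Set.mem_add.1 hx
      obtain ⟨y, hy, rfl⟩ := ha
      obtain ⟨d', hd', rfl⟩ := hb
      obtain ⟨d, hd, rfl⟩ := hd'
      have hexp : (A ^ t) *ᵥ (A *ᵥ y + E *ᵥ (α • d))
          = (A ^ (t+1)) *ᵥ y + ((A ^ t) * E) *ᵥ (α • d) := by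
        rw [Matrix.mulVec_add, Matrix.mulVec_mulVec, Matrix.mulVec_mulVec, ← pow_succ]
      rw [hexp]
      have h1 := ih y hy (t + 1)
      have h2 : ‖((A ^ t) * E) *ᵥ (α • d)‖ ≤ α * ‖E‖ * Dbd * ‖A ^ t‖ := by
        calc ‖((A ^ t) * E) *ᵥ (α • d)‖ ≤ ‖(A ^ t) * E‖ * ‖α • d‖ :=
              Matrix.linfty_opNorm_mulVec _ _
          _ ≤ (‖A ^ t‖ * ‖E‖) * (α * Dbd) := by
              apply mul_le_mul (Matrix.linfty_opNorm_mul _ _) ?_ (norm_nonneg _)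
                (by positivity)
              rw [norm_smul, Real.norm_eq_abs, abs_of_nonneg hα]
              exact mul_le_mul_of_nonneg_left (hD d hd) hα
          _ = α * ‖E‖ * Dbd * ‖A ^ t‖ := by ring
      have hsplit : ∑ j ∈ Finset.Ico t (t + (k + 1)), ‖A ^ j‖
          = ‖A ^ t‖ + ∑ j ∈ Finset.Ico (t + 1) (t + 1 + k), ‖A ^ j‖ := by
        rw [show t + (k + 1) = t + 1 + k by omega]
        exact Finset.sum_eq_sum_Ico_succ_bot (by omega) _
      calc ‖(A ^ (t+1)) *ᵥ y + ((A ^ t) * E) *ᵥ (α • d)‖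
          ≤ ‖(A ^ (t+1)) *ᵥ y‖ + ‖((A ^ t) * E) *ᵥ (α • d)‖ := norm_add_le _ _
        _ ≤ α * ‖E‖ * Dbd * ∑ j ∈ Finset.Ico (t + 1) (t + 1 + k), ‖A ^ j‖
            + α * ‖E‖ * Dbd * ‖A ^ t‖ := add_le_add h1 h2
        _ = α * ‖E‖ * Dbd * ∑ j ∈ Finset.Ico t (t + (k + 1)), ‖A ^ j‖ := by
            rw [hsplit]; ring
  intro k x hx
  have := key k x hx 0
  rw [pow_zero, Matrix.one_mulVec] at this
  refine this.trans ?_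
  apply mul_le_mul_of_nonneg_left _ (by positivity)
  rw [zero_add, ← Finset.range_eq_Ico]
  exact hS k

theorem alphaStar_well_defined {n m r : ℕ} (hrn : r ≤ n)
    (A : Matrix (Fin n) (Fin n) ℝ) (E : Matrix (Fin n) (Fin m) ℝ)
    (X : Set (Fin n → ℝ)) (D : Set (Fin m → ℝ))
    (hA1 : Assumption1 hrn A E X D) (hA2 : Assumption2 hrn A) :
    {α : ℝ | 0 < α ∧ Rinf A E D α ⊆ X}.Nonempty ∧
      BddAbove {α : ℝ | 0 < α ∧ Rinf A E D α ⊆ X} ∧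
      0 < alphaStar A E X D := by
  obtain ⟨hn, hm, hr, hlow, hlowE, hctrl, hX, hD⟩ := hA1
  -- the full matrix A is strictly stable
  have hstab : StrictlyStable A := by
    intro μ hμ
    rw [aux_spec_iff_root, aux_charpoly_block hrn A hlow, Polynomial.IsRoot.def,
      Polynomial.eval_mul, mul_eq_zero] at hμ
    rcases hμ with h | h
    · exact hA2.1 μ ((aux_spec_iff_root _ μ).2 h)
    · exact hA2.2 μ ((aux_spec_iff_root _ μ).2 h)
  obtain ⟨S, hSpos, hS⟩ := aux_sum_pow_norm_bound hn A hstab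
  -- bound on D
  obtain ⟨Dbd0, hDbd0⟩ := hD.2.1.isBounded.subset_closedBall 0
  set Dbd : ℝ := max Dbd0 0 with hDbddef
  have hDbd : 0 ≤ Dbd := le_max_right _ _
  have hDle : ∀ d ∈ D, ‖d‖ ≤ Dbd := by
    intro d hd
    have := hDbd0 hd
    rw [Metric.mem_closedBall, dist_zero_right] at this
    exact this.trans (le_max_left _ _)
  -- ball inside X
  have h0X := hX.2.2
  rw [mem_interior_iff_mem_nhds, Metric.mem_nhds_iff] at h0X
  obtain ⟨ε, hε, hballX⟩ := h0X
  -- Part 1 : nonemptiness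
  set K : ℝ := ‖E‖ * Dbd * S with hKdef
  have hK0 : 0 ≤ K := by positivity
  set α₀ : ℝ := ε / (2 * (K + 1)) with hα₀def
  have hα₀ : 0 < α₀ := by positivity
  have hmem₀ : α₀ ∈ {α : ℝ | 0 < α ∧ Rinf A E D α ⊆ X} := by
    refine ⟨hα₀, fun x hx => ?_⟩
    obtain ⟨_, ⟨k, rfl⟩, hk⟩ := hx
    have hb := aux_Rseq_bound A E D α₀ hα₀.le Dbd S hDle hDbd hS k x hk
    have heq : α₀ * (K + 1) = ε / 2 := by
      rw [hα₀def]; field_simp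
    apply hballX
    rw [Metric.mem_ball, dist_zero_right]
    have h1 : α₀ * ‖E‖ * Dbd * S = α₀ * K := by rw [hKdef]; ring
    nlinarith [hb]
  -- Part 2 : bounded above
  have hEne : ∃ i j, E i j ≠ 0 := by
    by_contra h
    push_neg at h
    have hE1 : blockE1 hrn E = 0 := by
      ext i j; simp [blockE1, h]
    have hzero : controllabilityMatrix hrn A E = 0 := by
      ext i pj
      simp [controllabilityMatrix, hE1]
    rw [hzero, Matrix.rank_zero] at hctrl
    omega
  obtain ⟨i0, j0, hE0⟩ := hEne
  have h0D := hD.2.2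
  rw [mem_interior_iff_mem_nhds, Metric.mem_nhds_iff] at h0D
  obtain ⟨δ, hδ, hballD⟩ := h0D
  set d₀ : Fin m → ℝ := (δ / 2) • (Pi.single j0 1 : Fin m → ℝ) with hd₀def
  have hsingle : ‖(Pi.single j0 1 : Fin m → ℝ)‖ ≤ 1 := by
    rw [pi_norm_le_iff_of_nonneg zero_le_one]
    intro i
    rcases eq_or_ne i j0 with h | h <;> simp [Pi.single_apply, h]
  have hd₀D : d₀ ∈ D := by
    apply hballD
    rw [Metric.mem_ball, dist_zero_right, hd₀def, norm_smul, Real.norm_eq_abs,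
      abs_of_nonneg (by linarith : (0:ℝ) ≤ δ / 2)]
    nlinarith
  set v : Fin n → ℝ := E *ᵥ d₀ with hvdef
  have hvi : v i0 = (δ / 2) * E i0 j0 := by
    rw [hvdef, hd₀def, Matrix.mulVec_smul]
    simp only [Pi.smul_apply, smul_eq_mul]
    congr 1
    simp [Matrix.mulVec, dotProduct, Pi.single_apply]
  have hv : 0 < ‖v‖ := by
    have h1 : ‖v i0‖ ≤ ‖v‖ := norm_le_pi_norm v i0
    have h2 : 0 < ‖v i0‖ := by
      rw [hvi, Real.norm_eq_abs, abs_mul]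
      have : 0 < |E i0 j0| := abs_pos.2 hE0
      have : 0 < |δ / 2| := abs_pos.2 (by linarith)
      positivity
    linarith
  obtain ⟨Rb, hRb⟩ := hX.2.1.isBounded.subset_closedBall 0
  have hbdd : BddAbove {α : ℝ | 0 < α ∧ Rinf A E D α ⊆ X} := by
    refine ⟨Rb / ‖v‖, fun α hα => ?_⟩
    obtain ⟨hαpos, hsub⟩ := hα
    have hmem1 : α • v ∈ Rseq A E D α 1 := by
      rw [show Rseq A E D α 1 = A.mulVec '' (Rseq A E D α 0) + E.mulVec '' (α • D) from rfl]
      have h1 : α • v = A *ᵥ (0 : Fin n → ℝ) + E *ᵥ (α • d₀) := by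
        rw [Matrix.mulVec_zero, zero_add, Matrix.mulVec_smul]
      rw [h1]
      exact Set.add_mem_add ⟨0, rfl, rfl⟩ ⟨α • d₀, smul_mem_smul_set hd₀D, rfl⟩
    have hXmem : α • v ∈ X := hsub (Set.mem_iUnion.2 ⟨1, hmem1⟩)
    have := hRb hXmem
    rw [Metric.mem_closedBall, dist_zero_right, norm_smul, Real.norm_eq_abs,
      abs_of_pos hαpos] at this
    rw [le_div_iff₀ hv]
    exact this
  refine ⟨⟨α₀, hmem₀⟩, hbdd, ?_⟩
  exact lt_of_lt_of_le hα₀ (le_csSup hbdd hmem₀)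


end RPIScaling
end

section
/- Under Assumptions 1 and 2, for every scalar α > 0 the following are equivalent: (a) α ≠ α*; (b) for every ε > 0 there exists δ > 0 such that P_min^α ⊆ P_min^{α+δ} ⊆ (1+ε) • P_min^α and P_max^{α+δ} ⊆ P_max^α ⊆ (1+ε) • P_max^{α+δ}. -/
open Matrix Set Pointwise

namespace RPIScaling

/-! ### Auxiliary material -/

open Filter Topology
open scoped ENNReal NNReal

section Aux

variable {n m r : ℕ}

attribute [local instance] Matrix.linftyOpNormedAddCommGroup Matrix.linftyOpNormedRing
  Matrix.linftyOpNormedAlgebra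

lemma norm_map_complex {p q : ℕ} (M : Matrix (Fin p) (Fin q) ℝ) :
    ‖M.map (algebraMap ℝ ℂ)‖ = ‖M‖ := by
  have : ‖M.map (algebraMap ℝ ℂ)‖₊ = ‖M‖₊ := by
    simp only [Matrix.linfty_opNNNorm_def, Matrix.map_apply, Complex.coe_algebraMap,
      Complex.nnnorm_real]
  exact congrArg NNReal.toReal this

lemma spec_subset (hrn : r ≤ n) (A : Matrix (Fin n) (Fin n) ℝ)
    (hblock : ∀ i j : Fin n, r ≤ (i : ℕ) → (j : ℕ) < r → A i j = 0) :
    spectrum ℂ (A.map (algebraMap ℝ ℂ)) ⊆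
      spectrum ℂ ((blockA11 hrn A).map (algebraMap ℝ ℂ)) ∪
      spectrum ℂ ((blockA22 r A).map (algebraMap ℝ ℂ)) := by
  intro μ hμ
  by_contra hc
  rw [Set.mem_union, not_or] at hc
  obtain ⟨h11, h22⟩ := hc
  rw [spectrum.mem_iff] at hμ
  apply hμ
  rw [Matrix.isUnit_iff_isUnit_det, isUnit_iff_ne_zero]
  have hn' : r + (n - r) = n := by omega
  set e : Fin r ⊕ Fin (n - r) ≃ Fin n := finSumFinEquiv.trans (finCongr hn') with he
  have e_inl : ∀ i : Fin r, e (Sum.inl i) = Fin.castLE hrn i := by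
    intro i; apply Fin.ext; simp [he]
  have e_inr : ∀ i : Fin (n - r),
      e (Sum.inr i) = (⟨r + i.1, by have h := i.2; omega⟩ : Fin n) := by
    intro i; apply Fin.ext; simp [he]
  set M := algebraMap ℂ (Matrix (Fin n) (Fin n) ℂ) μ - A.map (algebraMap ℝ ℂ) with hM
  have h1det : (algebraMap ℂ (Matrix (Fin r) (Fin r) ℂ) μ -
      (blockA11 hrn A).map (algebraMap ℝ ℂ)).det ≠ 0 := by
    have := spectrum.notMem_iff.mp h11
    rwa [Matrix.isUnit_iff_isUnit_det, isUnit_iff_ne_zero] at this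
  have h2det : (algebraMap ℂ (Matrix (Fin (n - r)) (Fin (n - r)) ℂ) μ -
      (blockA22 r A).map (algebraMap ℝ ℂ)).det ≠ 0 := by
    have := spectrum.notMem_iff.mp h22
    rwa [Matrix.isUnit_iff_isUnit_det, isUnit_iff_ne_zero] at this
  have hsub : M.submatrix e e = Matrix.fromBlocks
      (algebraMap ℂ (Matrix (Fin r) (Fin r) ℂ) μ - (blockA11 hrn A).map (algebraMap ℝ ℂ))
      (M.submatrix (fun i => e (Sum.inl i)) (fun j => e (Sum.inr j)))
      0
      (algebraMap ℂ (Matrix (Fin (n - r)) (Fin (n - r)) ℂ) μ -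
        (blockA22 r A).map (algebraMap ℝ ℂ)) := by
    ext i j
    cases i with
    | inl i =>
      cases j with
      | inl j =>
        simp only [Matrix.submatrix_apply, Matrix.fromBlocks_apply₁₁, hM,
          Algebra.algebraMap_eq_smul_one, Matrix.sub_apply, Matrix.smul_apply,
          Matrix.one_apply, Matrix.map_apply, blockA11, smul_eq_mul, mul_ite, mul_one, mul_zero]
        rw [e_inl i, e_inl j]
        congr 1
        simp [Fin.castLE_inj]
      | inr j => rfl
    | inr i =>
      cases j with
      | inl j =>
        simp only [Matrix.submatrix_apply, Matrix.fromBlocks_apply₂₁, hM,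
          Algebra.algebraMap_eq_smul_one, Matrix.sub_apply, Matrix.smul_apply,
          Matrix.one_apply, Matrix.map_apply, Matrix.zero_apply, smul_eq_mul,
          mul_ite, mul_one, mul_zero]
        rw [e_inl j, e_inr i]
        have hne : (⟨r + i.1, by have h := i.2; omega⟩ : Fin n) ≠ Fin.castLE hrn j := by
          intro h
          have := congrArg Fin.val h
          simp at this
          omega
        rw [if_neg hne, hblock _ _ (by simp) (by simp [j.2])]
        simp
      | inr j =>
        simp only [Matrix.submatrix_apply, Matrix.fromBlocks_apply₂₂, hM,
          Algebra.algebraMap_eq_smul_one, Matrix.sub_apply, Matrix.smul_apply,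
          Matrix.one_apply, Matrix.map_apply, blockA22, smul_eq_mul, mul_ite, mul_one, mul_zero]
        rw [e_inr i, e_inr j]
        congr 1
        have : ((⟨r + i.1, by have h := i.2; omega⟩ : Fin n) =
            ⟨r + j.1, by have h := j.2; omega⟩) ↔ i = j := by
          constructor
          · intro h; have := congrArg Fin.val h; simp at this; exact Fin.ext this
          · intro h; subst h; rfl
        simp [this]
  have := Matrix.det_submatrix_equiv_self e M
  rw [hsub, Matrix.det_fromBlocks_zero₂₁] at this
  rw [← this]
  exact mul_ne_zero h1det h2det

theorem pow_norm_tendsto (hrn : r ≤ n) (hn : 0 < n) (A : Matrix (Fin n) (Fin n) ℝ)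
    (hblock : ∀ i j : Fin n, r ≤ (i : ℕ) → (j : ℕ) < r → A i j = 0)
    (h1 : StrictlyStable (blockA11 hrn A)) (h2 : StrictlyStable (blockA22 r A)) :
    Tendsto (fun k => ‖A ^ k‖) atTop (𝓝 0) := by
  haveI : Nonempty (Fin n) := Fin.pos_iff_nonempty.mp hn
  haveI : CompleteSpace (Matrix (Fin n) (Fin n) ℂ) := FiniteDimensional.complete ℂ _
  set B := A.map (algebraMap ℝ ℂ) with hB
  have hspec : ∀ μ ∈ spectrum ℂ B, ‖μ‖₊ < 1 := by
    intro μ hμ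
    have habs : ‖μ‖ < 1 := by
      rcases spec_subset hrn A hblock hμ with h | h
      · exact h1 μ h
      · exact h2 μ h
    have hnorm : ‖μ‖ < 1 := by exact habs
    rwa [← coe_nnnorm, ← NNReal.coe_one, NNReal.coe_lt_coe] at hnorm
  have hρ : spectralRadius ℂ B < 1 := by
    have := spectrum.spectralRadius_lt_of_forall_lt B hspec
    simpa using this
  obtain ⟨q, hq1, hq2⟩ := ENNReal.lt_iff_exists_nnreal_btwn.mp hρ
  have hq2' : (q : ℝ) < 1 := by exact_mod_cast hq2
  have hlim := spectrum.limsup_pow_nnnorm_pow_one_div_le_spectralRadius B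
  have hev : ∀ᶠ k : ℕ in atTop, (‖B ^ k‖₊ : ℝ≥0∞) ^ (1 / (k : ℝ)) < (q : ℝ≥0∞) :=
    Filter.eventually_lt_of_limsup_lt (lt_of_le_of_lt hlim hq1)
  have hbound : ∀ᶠ k : ℕ in atTop, ‖B ^ k‖ ≤ (q : ℝ) ^ k := by
    filter_upwards [hev, Filter.eventually_ge_atTop 1] with k hk hk1
    have hkne : (k : ℝ) ≠ 0 := by positivity
    have hx : ((‖B ^ k‖₊ : ℝ≥0∞) ^ (1 / (k : ℝ))) ^ (k : ℝ) = (‖B ^ k‖₊ : ℝ≥0∞) := by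
      rw [← ENNReal.rpow_mul, one_div_mul_cancel hkne, ENNReal.rpow_one]
    have hle : (‖B ^ k‖₊ : ℝ≥0∞) ≤ (q : ℝ≥0∞) ^ (k : ℝ) := by
      rw [← hx]
      exact ENNReal.rpow_le_rpow (le_of_lt hk) (by positivity)
    rw [ENNReal.rpow_natCast, ← ENNReal.coe_pow, ENNReal.coe_le_coe] at hle
    have : (‖B ^ k‖₊ : ℝ) ≤ ((q ^ k : ℝ≥0) : ℝ) := NNReal.coe_le_coe.mpr hle
    simpa [NNReal.coe_pow] using this
  have hq0 : (0 : ℝ) ≤ (q : ℝ) := q.coe_nonneg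
  have hBlim : Tendsto (fun k => ‖B ^ k‖) atTop (𝓝 0) :=
    squeeze_zero' (Eventually.of_forall fun _ => norm_nonneg _) hbound
      (tendsto_pow_atTop_nhds_zero_of_lt_one hq0 hq2')
  have hmap : ∀ k, ‖A ^ k‖ = ‖B ^ k‖ := by
    intro k
    have : B ^ k = (A ^ k).map (algebraMap ℝ ℂ) := by
      have : B = (algebraMap ℝ ℂ).mapMatrix A := rfl
      rw [this, ← map_pow]; rfl
    rw [this, norm_map_complex]
  simpa only [hmap] using hBlim

theorem pow_mulVec_facts (hrn : r ≤ n) (hn : 0 < n) (A : Matrix (Fin n) (Fin n) ℝ)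
    (hblock : ∀ i j : Fin n, r ≤ (i : ℕ) → (j : ℕ) < r → A i j = 0)
    (h1 : StrictlyStable (blockA11 hrn A)) (h2 : StrictlyStable (blockA22 r A)) :
    ∃ C : ℝ, 0 < C ∧ (∀ (k : ℕ) (v : Fin n → ℝ), ‖(A ^ k).mulVec v‖ ≤ C * ‖v‖) ∧
      ∀ x : Fin n → ℝ, Tendsto (fun k => (A ^ k).mulVec x) atTop (𝓝 0) := by
  have hlim := pow_norm_tendsto hrn hn A hblock h1 h2
  have hev : ∀ᶠ k : ℕ in atTop, ‖A ^ k‖ < 1 := hlim.eventually_lt_const one_pos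
  obtain ⟨N, hN⟩ := Filter.eventually_atTop.mp hev
  set C : ℝ := 1 + ∑ j ∈ Finset.range N, ‖A ^ j‖ with hC
  have hCsum : (0:ℝ) ≤ ∑ j ∈ Finset.range N, ‖A ^ j‖ :=
    Finset.sum_nonneg fun j _ => norm_nonneg _
  have hC0 : 0 < C := by positivity
  have hCb : ∀ k : ℕ, ‖A ^ k‖ ≤ C := by
    intro k
    rcases le_or_gt N k with h | h
    · have := hN k h
      nlinarith
    · have h1' : ‖A ^ k‖ ≤ ∑ j ∈ Finset.range N, ‖A ^ j‖ :=
        Finset.single_le_sum (f := fun j => ‖A ^ j‖) (fun j _ => norm_nonneg _)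
          (Finset.mem_range.mpr h)
      linarith
  refine ⟨C, hC0, ?_, ?_⟩
  · intro k v
    calc ‖(A ^ k).mulVec v‖ ≤ ‖A ^ k‖ * ‖v‖ := Matrix.linfty_opNorm_mulVec _ _
    _ ≤ C * ‖v‖ := mul_le_mul_of_nonneg_right (hCb k) (norm_nonneg _)
  · intro x
    rw [tendsto_zero_iff_norm_tendsto_zero]
    refine squeeze_zero (g := fun k => ‖A ^ k‖ * ‖x‖) (fun k => norm_nonneg _)
      (fun k => Matrix.linfty_opNorm_mulVec _ _) (by simpa using hlim.mul_const ‖x‖)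

end Aux

section SetAux

variable {n m : ℕ} (A : Matrix (Fin n) (Fin n) ℝ) (E : Matrix (Fin n) (Fin m) ℝ)
  (X : Set (Fin n → ℝ)) (D : Set (Fin m → ℝ))

lemma star_mem {p : ℕ} {S : Set (Fin p → ℝ)} (hS : Convex ℝ S) (h0 : (0 : Fin p → ℝ) ∈ S)
    {c : ℝ} (hc : 0 ≤ c) (hc1 : c ≤ 1) {x : Fin p → ℝ} (hx : x ∈ S) : c • x ∈ S :=
  hS.smul_mem_of_zero_mem h0 hx ⟨hc, hc1⟩

lemma combo_mem {p : ℕ} {S : Set (Fin p → ℝ)} (hS : Convex ℝ S) (h0 : (0 : Fin p → ℝ) ∈ S)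
    {a b : ℝ} {x y : Fin p → ℝ} (ha : 0 ≤ a) (hb : 0 ≤ b) (hab : a + b ≤ 1)
    (hx : x ∈ S) (hy : y ∈ S) : a • x + b • y ∈ S := by
  rcases eq_or_lt_of_le (add_nonneg ha hb) with h | h
  · have ha0 : a = 0 := by linarith
    have hb0 : b = 0 := by linarith
    simp [ha0, hb0, h0]
  · have hc : a • x + b • y = (a + b) • ((a / (a + b)) • x + (b / (a + b)) • y) := by
      rw [smul_add, smul_smul, smul_smul, mul_div_cancel₀ _ (ne_of_gt h),
        mul_div_cancel₀ _ (ne_of_gt h)]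
    rw [hc]
    refine star_mem hS h0 (le_of_lt h) hab ?_
    exact hS hx hy (by positivity) (by positivity) (by field_simp)

lemma smulD_mono {p : ℕ} {S : Set (Fin p → ℝ)} (hS : Convex ℝ S) (h0 : (0 : Fin p → ℝ) ∈ S)
    {a b : ℝ} (ha : 0 < a) (hab : a ≤ b) : a • S ⊆ b • S := by
  intro d hd
  obtain ⟨d₀, hd₀, rfl⟩ := hd
  have hb : 0 < b := lt_of_lt_of_le ha hab
  refine ⟨(a / b) • d₀, star_mem hS h0 (by positivity) (by rw [div_le_one hb]; exact hab) hd₀, ?_⟩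
  show b • ((a / b) • d₀) = a • d₀
  rw [smul_smul, mul_comm, div_mul_cancel₀ _ (ne_of_gt hb)]

lemma image_mulVec_smul {p q : ℕ} (M : Matrix (Fin p) (Fin q) ℝ) (c : ℝ)
    (S : Set (Fin q → ℝ)) : M.mulVec '' (c • S) = c • (M.mulVec '' S) := by
  ext x
  constructor
  · rintro ⟨y, ⟨z, hz, rfl⟩, rfl⟩
    exact ⟨M.mulVec z, ⟨z, hz, rfl⟩, (M.mulVec_smul c z).symm⟩
  · rintro ⟨y, ⟨z, hz, rfl⟩, rfl⟩
    exact ⟨c • z, ⟨z, hz, rfl⟩, M.mulVec_smul c z⟩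

lemma smul_set_add' {p : ℕ} (c : ℝ) (S T : Set (Fin p → ℝ)) :
    c • (S + T) = c • S + c • T := by
  ext x
  constructor
  · rintro ⟨y, hy, rfl⟩
    obtain ⟨u, hu, v, hv, rfl⟩ := Set.mem_add.mp hy
    exact Set.mem_add.mpr ⟨c • u, ⟨u, hu, rfl⟩, c • v, ⟨v, hv, rfl⟩, (smul_add c u v).symm⟩
  · rintro hx
    obtain ⟨u', ⟨u, hu, rfl⟩, v', ⟨v, hv, rfl⟩, rfl⟩ := Set.mem_add.mp hx
    exact ⟨u + v, Set.mem_add.mpr ⟨u, hu, v, hv, rfl⟩, smul_add c u v⟩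

variable {A E X D}

lemma Rseq_zero (α : ℝ) : Rseq A E D α 0 = {0} := rfl

lemma Rseq_succ (α : ℝ) (k : ℕ) :
    Rseq A E D α (k + 1) = A.mulVec '' (Rseq A E D α k) + E.mulVec '' (α • D) := rfl

lemma zero_mem_Rseq (h0D : (0 : Fin m → ℝ) ∈ D) (α : ℝ) (k : ℕ) :
    (0 : Fin n → ℝ) ∈ Rseq A E D α k := by
  induction k with
  | zero => exact rfl
  | succ k ih =>
    rw [Rseq_succ]
    have h1 : (0 : Fin n → ℝ) ∈ A.mulVec '' (Rseq A E D α k) := ⟨0, ih, Matrix.mulVec_zero A⟩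
    have h2 : (0 : Fin n → ℝ) ∈ E.mulVec '' (α • D) :=
      ⟨0, ⟨0, h0D, smul_zero α⟩, Matrix.mulVec_zero E⟩
    have := Set.add_mem_add h1 h2
    simpa using this

lemma Rseq_mono_succ (h0D : (0 : Fin m → ℝ) ∈ D) (α : ℝ) (k : ℕ) :
    Rseq A E D α k ⊆ Rseq A E D α (k + 1) := by
  induction k with
  | zero =>
    intro x hx
    rw [Rseq_zero, Set.mem_singleton_iff] at hx
    subst hx
    exact zero_mem_Rseq h0D α 1
  | succ k ih =>
    rw [Rseq_succ, Rseq_succ]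
    exact Set.add_subset_add (Set.image_mono ih) subset_rfl

lemma Rseq_mono_s9 (h0D : (0 : Fin m → ℝ) ∈ D) (α : ℝ) {k l : ℕ} (hkl : k ≤ l) :
    Rseq A E D α k ⊆ Rseq A E D α l := by
  induction l with
  | zero => simpa [Nat.le_zero.mp hkl] using subset_rfl
  | succ l ih =>
    rcases Nat.lt_or_ge k (l + 1) with h | h
    · exact (ih (by omega)).trans (Rseq_mono_succ h0D α l)
    · have : k = l + 1 := by omega
      subst this; exact subset_rfl

lemma Rseq_smul (c α : ℝ) (k : ℕ) :
    Rseq A E D (c * α) k = c • Rseq A E D α k := by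
  induction k with
  | zero => simp [Rseq, Set.smul_set_singleton]
  | succ k ih =>
    rw [Rseq_succ, Rseq_succ, ih, mul_smul, image_mulVec_smul, image_mulVec_smul,
      smul_set_add']


lemma Rseq_scale {α β : ℝ} (hα : 0 < α) (hβ : 0 < β) (k : ℕ) :
    Rseq A E D α k = (α / β) • Rseq A E D β k := by
  rw [← Rseq_smul, div_mul_cancel₀ _ (ne_of_gt hβ)]

lemma isRPI_of_le (hD : Convex ℝ D) (h0D : (0 : Fin m → ℝ) ∈ D) {α β : ℝ} (hα : 0 < α)
    (hαβ : α ≤ β) {P : Set (Fin n → ℝ)} (h : IsRPI A E X D β P) : IsRPI A E X D α P :=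
  ⟨h.1, fun x hx d hd => h.2 x hx d (smulD_mono hD h0D hα hαβ hd)⟩

lemma RPI_reach {α : ℝ} {P : Set (Fin n → ℝ)} (h : IsRPI A E X D α P) {x : Fin n → ℝ}
    (hx : x ∈ P) : ∀ k, ∀ y ∈ Rseq A E D α k, (A ^ k).mulVec x + y ∈ P := by
  intro k
  induction k with
  | zero =>
    intro y hy
    rw [Rseq_zero, Set.mem_singleton_iff] at hy
    subst hy
    simpa [Matrix.one_mulVec] using hx
  | succ k ih =>
    intro y hy
    rw [Rseq_succ] at hy
    obtain ⟨u, ⟨y', hy', rfl⟩, v, ⟨d, hd, rfl⟩, rfl⟩ := Set.mem_add.mp hy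
    have hmem := h.2 _ (ih y' hy') d hd
    have heq : A.mulVec ((A ^ k).mulVec x + y') + E.mulVec d
        = (A ^ (k + 1)).mulVec x + (A.mulVec y' + E.mulVec d) := by
      rw [Matrix.mulVec_add, Matrix.mulVec_mulVec, ← pow_succ']
      abel
    rwa [heq] at hmem

/-- The set `T^α` of all states whose whole reachable tube stays inside `X`. -/
def Tset (A : Matrix (Fin n) (Fin n) ℝ) (E : Matrix (Fin n) (Fin m) ℝ)
    (X : Set (Fin n → ℝ)) (D : Set (Fin m → ℝ)) (α : ℝ) : Set (Fin n → ℝ) :=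
  {x | ∀ k, ∀ y ∈ Rseq A E D α k, (A ^ k).mulVec x + y ∈ X}

lemma mem_Rseq_succ_term (h0D : (0 : Fin m → ℝ) ∈ D) {α : ℝ} {d : Fin m → ℝ}
    (hd : d ∈ α • D) {k : ℕ} {y : Fin n → ℝ} (hy : y ∈ Rseq A E D α k) :
    (A ^ k * E).mulVec d + y ∈ Rseq A E D α (k + 1) := by
  induction k generalizing y with
  | zero =>
    rw [Rseq_zero, Set.mem_singleton_iff] at hy
    subst hy
    rw [Rseq_succ]
    refine Set.mem_add.mpr ⟨0, ⟨0, rfl, Matrix.mulVec_zero A⟩, E.mulVec d, ⟨d, hd, rfl⟩, ?_⟩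
    simp [pow_zero, Matrix.one_mul]
  | succ k ih =>
    rw [Rseq_succ] at hy
    obtain ⟨u, ⟨y', hy', rfl⟩, v, ⟨d', hd', rfl⟩, rfl⟩ := Set.mem_add.mp hy
    rw [Rseq_succ]
    refine Set.mem_add.mpr ⟨A.mulVec ((A ^ k * E).mulVec d + y'),
      ⟨(A ^ k * E).mulVec d + y', ih hy', rfl⟩, E.mulVec d', ⟨d', hd', rfl⟩, ?_⟩
    rw [Matrix.mulVec_add, Matrix.mulVec_mulVec, ← Matrix.mul_assoc, ← pow_succ']
    abel

lemma Tset_subset_X : Tset A E X D α ⊆ X := by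
  intro x hx
  have := hx 0 0 (by rw [Rseq_zero]; rfl)
  simpa [Matrix.one_mulVec] using this

lemma Tset_isRPI (h0D : (0 : Fin m → ℝ) ∈ D) (α : ℝ) :
    IsRPI A E X D α (Tset A E X D α) := by
  refine ⟨Tset_subset_X, ?_⟩
  intro x hx d hd k y hy
  have h2 := hx (k + 1) _ (mem_Rseq_succ_term h0D hd hy)
  have heq : (A ^ k).mulVec (A.mulVec x + E.mulVec d) + y
      = (A ^ (k + 1)).mulVec x + ((A ^ k * E).mulVec d + y) := by
    rw [Matrix.mulVec_add, Matrix.mulVec_mulVec, Matrix.mulVec_mulVec, ← pow_succ]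
    abel
  rwa [heq]

lemma Pmax_eq_Tset (h0D : (0 : Fin m → ℝ) ∈ D) (α : ℝ) :
    Pmax A E X D α = Tset A E X D α := by
  apply subset_antisymm
  · refine Set.sUnion_subset ?_
    intro P hP x hx k y hy
    exact hP.1 (RPI_reach hP hx k y hy)
  · exact Set.subset_sUnion_of_mem (Tset_isRPI h0D α)

lemma Pmax_isRPI (h0D : (0 : Fin m → ℝ) ∈ D) (α : ℝ) :
    IsRPI A E X D α (Pmax A E X D α) := by
  rw [Pmax_eq_Tset h0D]
  exact Tset_isRPI h0D α

lemma Pmax_antitone (hD : Convex ℝ D) (h0D : (0 : Fin m → ℝ) ∈ D) {α β : ℝ} (hα : 0 < α)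
    (hαβ : α ≤ β) : Pmax A E X D β ⊆ Pmax A E X D α := by
  intro x hx
  obtain ⟨P, hP, hxP⟩ := Set.mem_sUnion.mp hx
  exact Set.mem_sUnion.mpr ⟨P, isRPI_of_le hD h0D hα hαβ hP, hxP⟩

lemma Pmin_subset_Pmax (α : ℝ) : Pmin A E X D α ⊆ Pmax A E X D α :=
  Set.sInter_subset_of_mem (Set.mem_union_right _ rfl)

lemma Rinf_subset_of_RPI (hXcl : IsClosed X) (h0D : (0 : Fin m → ℝ) ∈ D)
    (htend : ∀ x : Fin n → ℝ, Tendsto (fun k => (A ^ k).mulVec x) atTop (𝓝 0))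
    {α : ℝ} {P : Set (Fin n → ℝ)} (hP : IsRPI A E X D α P) (hne : P.Nonempty) :
    Rinf A E D α ⊆ X := by
  obtain ⟨x₀, hx₀⟩ := hne
  rw [Rinf, Set.iUnion_subset_iff]
  intro k y hy
  have hmem : ∀ j : ℕ, (A ^ (k + j)).mulVec x₀ + y ∈ X := fun j =>
    hP.1 (RPI_reach hP hx₀ (k + j) y (Rseq_mono_s9 h0D α (Nat.le_add_right k j) hy))
  have hlim : Tendsto (fun j : ℕ => (A ^ (k + j)).mulVec x₀ + y) atTop (𝓝 (0 + y)) := by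
    apply Tendsto.add_const
    have hcomp : Tendsto (fun j : ℕ => k + j) atTop atTop :=
      Filter.Tendsto.congr (fun j => Nat.add_comm j k) (tendsto_add_atTop_nat k)
    exact (htend x₀).comp hcomp
  have := hXcl.mem_of_tendsto hlim (Eventually.of_forall hmem)
  simpa using this

end SetAux

set_option maxHeartbeats 2000000 in
theorem continuity_aux {n m r : ℕ} (hrn : r ≤ n)
    (A : Matrix (Fin n) (Fin n) ℝ) (E : Matrix (Fin n) (Fin m) ℝ)
    (X : Set (Fin n → ℝ)) (D : Set (Fin m → ℝ))
    (hA1 : Assumption1 hrn A E X D) (hA2 : Assumption2 hrn A)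
    (α : ℝ) (hα : 0 < α) :
    α ≠ alphaStar A E X D ↔
      ∀ ε : ℝ, 0 < ε → ∃ δ : ℝ, 0 < δ ∧
        Pmin A E X D α ⊆ Pmin A E X D (α + δ) ∧
        Pmin A E X D (α + δ) ⊆ (1 + ε) • Pmin A E X D α ∧
        Pmax A E X D (α + δ) ⊆ Pmax A E X D α ∧
        Pmax A E X D α ⊆ (1 + ε) • Pmax A E X D (α + δ) := by
  classical
  obtain ⟨hXconv, hXcomp, h0intX⟩ := hA1.hX
  obtain ⟨hDconv, hDcomp, h0intD⟩ := hA1.hD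
  have h0X : (0 : Fin n → ℝ) ∈ X := interior_subset h0intX
  have h0D : (0 : Fin m → ℝ) ∈ D := interior_subset h0intD
  have hXcl : IsClosed X := hXcomp.isClosed
  obtain ⟨C, hC0, hCb, htend⟩ :=
    pow_mulVec_facts hrn hA1.hn A hA1.lowerLeftA hA2.1 hA2.2
  set S : Set ℝ := {β : ℝ | 0 < β ∧ Rinf A E D β ⊆ X} with hSdef
  have hstar : alphaStar A E X D = sSup S := rfl
  obtain ⟨CX, hCX⟩ := isBounded_iff_forall_norm_le.mp hXcomp.isBounded
  have hE1 : ∃ (i : Fin r) (j : Fin m), blockE1 hrn E i j ≠ 0 := by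
    by_contra h
    push_neg at h
    have hz : controllabilityMatrix hrn A E = 0 := by
      ext i p
      simp only [controllabilityMatrix, Matrix.of_apply, Matrix.mul_apply, Matrix.zero_apply]
      exact Finset.sum_eq_zero fun k _ => by rw [h k p.2, mul_zero]
    have hc := hA1.controllable
    haveI : Nonempty (Fin r) := Fin.pos_iff_nonempty.mp hA1.hr
    rw [hz, Matrix.rank_zero] at hc
    have := hA1.hr
    omega
  obtain ⟨i0, j0, hEij⟩ := hE1
  obtain ⟨ρD, hρD, hballD⟩ := Metric.isOpen_iff.mp isOpen_interior 0 h0intD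
  set d₀ : Fin m → ℝ := Pi.single j0 (ρD / 2) with hd₀def
  have hd₀D : d₀ ∈ D := by
    apply interior_subset
    apply hballD
    rw [Metric.mem_ball, dist_zero_right]
    have hle : ‖d₀‖ ≤ ρD / 2 := by
      refine (pi_norm_le_iff_of_nonneg (by positivity)).mpr ?_
      intro l
      rw [hd₀def]
      rcases eq_or_ne l j0 with h | h
      · subst h
        rw [Pi.single_eq_same, Real.norm_eq_abs, abs_of_nonneg (by positivity)]
      · rw [Pi.single_eq_of_ne h]
        simp
        positivity
    linarith
  have hEd₀ : E.mulVec d₀ ≠ 0 := by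
    intro hcontra
    have h1 := congrFun hcontra (Fin.castLE hrn i0)
    rw [hd₀def, Matrix.mulVec_single] at h1
    have : E (Fin.castLE hrn i0) j0 = 0 := by
      have h2 : E (Fin.castLE hrn i0) j0 * (ρD / 2) = 0 := h1
      rcases mul_eq_zero.mp h2 with h | h
      · exact h
      · exfalso; revert h; positivity
    exact hEij this
  have hEd₀pos : 0 < ‖E.mulVec d₀‖ := norm_pos_iff.mpr hEd₀
  have hBddS : BddAbove S := by
    refine ⟨CX / ‖E.mulVec d₀‖, fun β hβ => ?_⟩
    obtain ⟨hβ0, hβX⟩ := hβ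
    have hmem : β • E.mulVec d₀ ∈ Rseq A E D β 1 := by
      rw [Rseq_succ]
      refine Set.mem_add.mpr ⟨0, ⟨0, by rw [Rseq_zero]; rfl, Matrix.mulVec_zero A⟩,
        E.mulVec (β • d₀), ⟨β • d₀, ⟨d₀, hd₀D, rfl⟩, rfl⟩, ?_⟩
      rw [Matrix.mulVec_smul, zero_add]
    have hX' : β • E.mulVec d₀ ∈ X := hβX (Set.mem_iUnion.mpr ⟨1, hmem⟩)
    have hn' := hCX _ hX'
    rw [norm_smul, Real.norm_eq_abs, abs_of_pos hβ0] at hn'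
    rw [le_div_iff₀ hEd₀pos]
    exact hn'
  have hSdown : ∀ β ∈ S, ∀ γ : ℝ, 0 < γ → γ ≤ β → γ ∈ S := by
    rintro β ⟨hβ0, hβX⟩ γ hγ0 hγβ
    refine ⟨hγ0, ?_⟩
    rw [Rinf, Set.iUnion_subset_iff]
    intro k y hy
    rw [Rseq_scale hγ0 hβ0 k] at hy
    obtain ⟨y', hy', rfl⟩ := hy
    have hy'X : y' ∈ X := hβX (Set.mem_iUnion.mpr ⟨k, hy'⟩)
    exact star_mem hXconv h0X (by positivity) (by rw [div_le_one hβ0]; exact hγβ) hy'X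
  have hmemS : 0 < sSup S → sSup S ∈ S := by
    intro hpos
    have hne : S.Nonempty := by
      by_contra h
      rw [Set.not_nonempty_iff_eq_empty] at h
      rw [h, Real.sSup_empty] at hpos
      exact lt_irrefl _ hpos
    refine ⟨hpos, ?_⟩
    rw [Rinf, Set.iUnion_subset_iff]
    intro k y hy
    have hmemX : ∀ j : ℕ, (1 - 1/((j:ℝ)+2)) • y ∈ X := by
      intro j
      have hjn : (0:ℝ) ≤ (j:ℝ) := Nat.cast_nonneg j
      have hc0 : 0 < 1 - 1/((j:ℝ)+2) := by
        have h1 : 1/((j:ℝ)+2) < 1 := by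
          rw [div_lt_one (by linarith)]
          linarith
        linarith
      have hc1 : 1 - 1/((j:ℝ)+2) < 1 := by
        have : 0 < 1/((j:ℝ)+2) := by positivity
        linarith
      set c : ℝ := 1 - 1/((j:ℝ)+2) with hcdef
      have hcs : c * sSup S < sSup S := by nlinarith
      obtain ⟨β, hβS, hβgt⟩ := exists_lt_of_lt_csSup hne hcs
      have hcS : c * sSup S ∈ S := hSdown β hβS _ (by positivity) (le_of_lt hβgt)
      have hmem2 : c • y ∈ Rseq A E D (c * sSup S) k := by
        rw [Rseq_smul]
        exact ⟨y, hy, rfl⟩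
      exact hcS.2 (Set.mem_iUnion.mpr ⟨k, hmem2⟩)
    have hlim : Tendsto (fun j : ℕ => (1 - 1/((j:ℝ)+2)) • y) atTop (𝓝 ((1:ℝ) • y)) := by
      apply Tendsto.smul_const
      have hat : Tendsto (fun j : ℕ => ((j:ℝ)+2)) atTop atTop :=
        tendsto_atTop_add_const_right _ 2 tendsto_natCast_atTop_atTop
      have h0 := hat.inv_tendsto_atTop
      have h0' : Tendsto (fun j : ℕ => 1/((j:ℝ)+2)) atTop (𝓝 0) := by
        exact h0.congr (fun j => by simp [one_div])
      simpa using tendsto_const_nhds.sub h0'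
    have := hXcl.mem_of_tendsto hlim (Eventually.of_forall hmemX)
    simpa using this
  have hPmaxEmpty : ∀ β : ℝ, 0 < β → sSup S < β → Pmax A E X D β = ∅ := by
    intro β hβ0 hβgt
    rw [Set.eq_empty_iff_forall_notMem]
    intro x hx
    obtain ⟨P, hP, hxP⟩ := Set.mem_sUnion.mp hx
    have hβS : β ∈ S := ⟨hβ0, Rinf_subset_of_RPI hXcl h0D htend hP ⟨x, hxP⟩⟩
    exact absurd (le_csSup hBddS hβS) (not_le.mpr hβgt)
  rcases lt_trichotomy α (alphaStar A E X D) with hlt | heq | hgt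
  · -- case α < α*
    have hlt' : α < sSup S := by rwa [hstar] at hlt
    have hpos : 0 < sSup S := lt_trans hα hlt'
    have hSS := hmemS hpos
    refine iff_of_true (ne_of_lt hlt) ?_
    intro ε hε
    have hε1 : (0:ℝ) < 1 + ε := by linarith
    set αs : ℝ := sSup S with hαs
    have hsub : 0 < αs - α := by simp only [hαs]; linarith
    set δ : ℝ := min (ε * α) ((ε / (1+ε)) * (αs - α)) with hδdef
    have hδ0 : 0 < δ := lt_min (by positivity) (by positivity)
    have hδεα : δ ≤ ε * α := min_le_left _ _
    have hδ2 : δ ≤ (ε/(1+ε)) * (αs - α) := min_le_right _ _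
    have hfrac : ε/(1+ε) < 1 := by rw [div_lt_one hε1]; linarith
    have hδlt : α + δ < αs := by nlinarith
    have hαδ0 : 0 < α + δ := by linarith
    have hαδS : (α + δ) ∈ S := hSdown αs hSS _ hαδ0 (le_of_lt hδlt)
    have hRX : ∀ k, ∀ y ∈ Rseq A E D αs k, y ∈ X := fun k y hy =>
      hSS.2 (Set.mem_iUnion.mpr ⟨k, hy⟩)
    have hRαX : ∀ k, ∀ u ∈ Rseq A E D α k, u ∈ X := by
      intro k u hu
      rw [Rseq_scale hα hpos k] at hu
      obtain ⟨w, hw, rfl⟩ := hu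
      exact star_mem hXconv h0X (by positivity)
        (by rw [div_le_one hpos]; linarith) (hRX k w hw)
    have hT0 : (0 : Fin n → ℝ) ∈ Tset A E X D (α+δ) := by
      intro k y hy
      have hyX : y ∈ X := by
        rw [Rseq_scale hαδ0 hpos k] at hy
        obtain ⟨w, hw, rfl⟩ := hy
        exact star_mem hXconv h0X (by positivity)
          (by rw [div_le_one hpos]; linarith) (hRX k w hw)
      simpa [Matrix.mulVec_zero] using hyX
    refine ⟨δ, hδ0, ?_, ?_, ?_, ?_⟩
    · -- Pmin α ⊆ Pmin (α+δ)
      intro x hx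
      have hx' := Set.mem_sInter.mp hx
      refine Set.mem_sInter.mpr ?_
      rintro M hM
      rcases hM with hM | hM
      · exact hx' M (Set.mem_union_left _ ⟨isRPI_of_le hDconv h0D hα (by linarith) hM.1, hM.2⟩)
      · rw [Set.mem_singleton_iff] at hM
        subst hM
        have hmem : x ∈ Tset A E X D (α+δ) := hx' _ (Set.mem_union_left _
          ⟨isRPI_of_le hDconv h0D hα (by linarith) (Tset_isRPI h0D (α+δ)), ⟨0, hT0⟩⟩)
        rw [Pmax_eq_Tset h0D]
        exact hmem
    · -- Pmin (α+δ) ⊆ (1+ε) • Pmin α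
      intro x hx
      have hxmax : x ∈ Pmax A E X D (α+δ) := Pmin_subset_Pmax (α+δ) hx
      rw [Set.mem_smul_set_iff_inv_smul_mem₀ (ne_of_gt hε1)]
      refine Set.mem_sInter.mpr ?_
      rintro M hM
      rcases hM with hM | hM
      · obtain ⟨hMrpi, x₀, hx₀⟩ := hM
        have hQrpi : IsRPI A E X D (α+δ) (((1+ε) • M) ∩ Pmax A E X D (α+δ)) := by
          constructor
          · exact (Set.inter_subset_right).trans (Pmax_isRPI h0D (α+δ)).1
          · rintro z ⟨hz1, hz2⟩ d hd
            refine ⟨?_, (Pmax_isRPI h0D (α+δ)).2 z hz2 d hd⟩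
            obtain ⟨z', hz', rfl⟩ := hz1
            obtain ⟨d₁, hd₁, rfl⟩ := hd
            have hd'' : ((α+δ)/(1+ε)) • d₁ ∈ α • D := by
              refine smulD_mono hDconv h0D (by positivity) ?_ ⟨d₁, hd₁, rfl⟩
              rw [div_le_iff₀ hε1]
              nlinarith
            have heq2 : A.mulVec ((1+ε) • z') + E.mulVec ((α+δ) • d₁)
                = (1+ε) • (A.mulVec z' + E.mulVec (((α+δ)/(1+ε)) • d₁)) := by
              rw [Matrix.mulVec_smul, Matrix.mulVec_smul, Matrix.mulVec_smul, smul_add,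
                smul_smul, mul_div_cancel₀ _ (ne_of_gt hε1)]
            rw [heq2]
            exact ⟨_, hMrpi.2 z' hz' _ hd'', rfl⟩
        obtain ⟨ρX, hρX, hballX⟩ := Metric.isOpen_iff.mp isOpen_interior 0 h0intX
        set θ : ℝ := (α+δ)/αs with hθ
        have hθ0 : 0 < θ := by positivity
        have hθ1 : θ < 1 := by rw [hθ, div_lt_one hpos]; exact hδlt
        have h1θ : (0:ℝ) < 1 - θ := by linarith
        have hρ' : 0 < (1-θ)*ρX/C := by positivity
        have hball : ∀ v : Fin n → ℝ, ‖v‖ < (1-θ)*ρX/C → v ∈ Tset A E X D (α+δ) := by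
          intro v hv k' u hu
          rw [Rseq_scale hαδ0 hpos k'] at hu
          obtain ⟨w, hw, rfl⟩ := hu
          have hwX := hRX k' w hw
          have hz0 : (1-θ)⁻¹ • ((A ^ k').mulVec v) ∈ X := by
            apply interior_subset
            apply hballX
            rw [Metric.mem_ball, dist_zero_right, norm_smul, Real.norm_eq_abs,
              abs_of_pos (by positivity)]
            have hb1 : ‖(A ^ k').mulVec v‖ ≤ C * ‖v‖ := hCb k' v
            have hb2 : C * ‖v‖ < C * ((1-θ)*ρX/C) := mul_lt_mul_of_pos_left hv hC0
            have hb3 : C * ((1-θ)*ρX/C) = (1-θ)*ρX := by field_simp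
            calc (1-θ)⁻¹ * ‖(A ^ k').mulVec v‖
                ≤ (1-θ)⁻¹ * (C * ‖v‖) := by
                  exact mul_le_mul_of_nonneg_left hb1 (by positivity)
              _ < (1-θ)⁻¹ * ((1-θ)*ρX) := by
                  apply mul_lt_mul_of_pos_left _ (by positivity)
                  linarith
              _ = ρX := by field_simp
          have hcombo := hXconv hz0 hwX (le_of_lt h1θ) (le_of_lt hθ0) (by ring)
          rw [smul_inv_smul₀ (ne_of_gt h1θ)] at hcombo
          exact hcombo
        have hevk : ∀ᶠ k in atTop, ‖(A ^ k).mulVec x₀‖ < ((1-θ)*ρX/C)/(1+ε) :=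
          (tendsto_zero_iff_norm_tendsto_zero.mp (htend x₀)).eventually_lt_const
            (by positivity)
        obtain ⟨k₀, hk₀⟩ := hevk.exists
        have hzQ : ((1+ε) • ((A ^ k₀).mulVec x₀)) ∈ ((1+ε) • M) ∩ Pmax A E X D (α+δ) := by
          constructor
          · refine ⟨(A ^ k₀).mulVec x₀, ?_, rfl⟩
            have := RPI_reach hMrpi hx₀ k₀ 0 (zero_mem_Rseq h0D α k₀)
            simpa using this
          · rw [Pmax_eq_Tset h0D]
            apply hball
            rw [norm_smul, Real.norm_eq_abs, abs_of_pos hε1]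
            calc (1+ε) * ‖(A ^ k₀).mulVec x₀‖
                < (1+ε) * (((1-θ)*ρX/C)/(1+ε)) := mul_lt_mul_of_pos_left hk₀ hε1
              _ = (1-θ)*ρX/C := by rw [mul_comm, div_mul_cancel₀ _ (ne_of_gt hε1)]
        have hxQ : x ∈ ((1+ε) • M) ∩ Pmax A E X D (α+δ) :=
          Set.mem_sInter.mp hx _ (Set.mem_union_left _ ⟨hQrpi, ⟨_, hzQ⟩⟩)
        have hx1 := hxQ.1
        rwa [Set.mem_smul_set_iff_inv_smul_mem₀ (ne_of_gt hε1)] at hx1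
      · rw [Set.mem_singleton_iff] at hM
        subst hM
        have hxmaxα : x ∈ Pmax A E X D α :=
          Pmax_antitone hDconv h0D hα (by linarith) hxmax
        rw [Pmax_eq_Tset h0D] at hxmaxα ⊢
        intro k u hu
        have huX : u ∈ X := hRαX k u hu
        have hstate := hxmaxα k u hu
        have hinv1 : (1+ε)⁻¹ * (1+ε) = 1 := inv_mul_cancel₀ (ne_of_gt hε1)
        have hinvle : (1+ε)⁻¹ ≤ 1 := by nlinarith
        have hkey : (A ^ k).mulVec ((1+ε)⁻¹ • x) + u =
            (1+ε)⁻¹ • ((A ^ k).mulVec x + u) + (1 - (1+ε)⁻¹) • u := by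
          rw [Matrix.mulVec_smul]
          module
        rw [hkey]
        exact combo_mem hXconv h0X (by positivity) (by linarith) (by linarith) hstate huX
    · -- Pmax (α+δ) ⊆ Pmax α
      exact Pmax_antitone hDconv h0D hα (by linarith)
    · -- Pmax α ⊆ (1+ε) • Pmax (α+δ)
      intro x hx
      rw [Set.mem_smul_set_iff_inv_smul_mem₀ (ne_of_gt hε1)]
      rw [Pmax_eq_Tset h0D] at hx ⊢
      intro k u hu
      rw [Rseq_scale hαδ0 hα k] at hu
      obtain ⟨u', hu', rfl⟩ := hu
      rw [Rseq_scale hα hpos k] at hu'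
      obtain ⟨w, hw, rfl⟩ := hu'
      have hwX : w ∈ X := hRX k w hw
      have hstate : (A ^ k).mulVec x + (α/αs) • w ∈ X := by
        refine hx k _ ?_
        rw [Rseq_scale hα hpos k]
        exact ⟨w, hw, rfl⟩
      set s : ℝ := (1+ε)⁻¹ with hs
      set t : ℝ := (α+δ)/α - s with ht
      have hs0 : 0 < s := by positivity
      have hinv1 : s * (1+ε) = 1 := inv_mul_cancel₀ (ne_of_gt hε1)
      have hs1 : s ≤ 1 := by nlinarith
      have ht0 : 0 ≤ t := by
        have h1 : (1:ℝ) ≤ (α+δ)/α := by rw [le_div_iff₀ hα]; linarith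
        simp only [ht]
        linarith
      have hαne : α ≠ 0 := ne_of_gt hα
      have hαsne : αs ≠ 0 := ne_of_gt hpos
      have hkey : (A ^ k).mulVec (s • x) + ((α+δ)/α) • ((α/αs) • w) =
          s • ((A ^ k).mulVec x + (α/αs) • w) + (t * (α/αs)) • w := by
        rw [Matrix.mulVec_smul, ht]
        module
      rw [hkey]
      refine combo_mem hXconv h0X (le_of_lt hs0) (by positivity) ?_ hstate hwX
      -- s + t * (α/αs) ≤ 1
      have h1s : 1 - s = ε/(1+ε) := by
        rw [hs]
        field_simp
        ring
      have hexp : s + t * (α/αs) = s + (1-s)*(α/αs) + δ/αs := by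
        rw [ht]
        field_simp
        ring
      have hbound : δ/αs ≤ ((ε/(1+ε))*(αs-α))/αs := by
        rw [div_le_div_iff₀ hpos hpos]
        nlinarith [hδ2, le_of_lt hpos]
      rw [hexp, h1s]
      have hfin : ε/(1+ε)*(α/αs) + ((ε/(1+ε))*(αs-α))/αs = ε/(1+ε) := by
        field_simp
        ring
      calc s + ε/(1+ε)*(α/αs) + δ/αs
          ≤ s + ε/(1+ε)*(α/αs) + ((ε/(1+ε))*(αs-α))/αs := by linarith
        _ = s + ε/(1+ε) := by rw [add_assoc, hfin]
        _ = 1 := by rw [← h1s]; ring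
  · -- case α = α*
    refine iff_of_false (fun hne => hne heq) ?_
    intro hcont
    obtain ⟨δ, hδ0, _h1, _h2, _h3, h4⟩ := hcont 1 one_pos
    have hpos : 0 < sSup S := by rw [← hstar, ← heq]; exact hα
    have hSS := hmemS hpos
    have h0max : (0 : Fin n → ℝ) ∈ Pmax A E X D α := by
      rw [Pmax_eq_Tset h0D]
      intro k y hy
      rw [heq, hstar] at hy
      have : y ∈ X := hSS.2 (Set.mem_iUnion.mpr ⟨k, hy⟩)
      simpa [Matrix.mulVec_zero] using this
    have hempty : Pmax A E X D (α + δ) = ∅ := by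
      refine hPmaxEmpty _ (by linarith) ?_
      rw [← hstar, ← heq]
      linarith
    have hmem := h4 h0max
    rw [hempty] at hmem
    simp only [Set.smul_set_empty] at hmem
    exact hmem
  · -- case α > α*
    refine iff_of_true (ne_of_gt hgt) ?_
    intro ε hε
    have hgt' : sSup S < α := by rwa [hstar] at hgt
    have h1 : Pmax A E X D α = ∅ := hPmaxEmpty α hα hgt'
    have h2 : Pmax A E X D (α+1) = ∅ := hPmaxEmpty (α+1) (by linarith) (by linarith)
    have h3 : Pmin A E X D α = ∅ :=
      Set.subset_empty_iff.mp (h1 ▸ Pmin_subset_Pmax (A := A) (E := E) (X := X) (D := D) α)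
    have h4 : Pmin A E X D (α+1) = ∅ :=
      Set.subset_empty_iff.mp (h2 ▸ Pmin_subset_Pmax (A := A) (E := E) (X := X) (D := D) (α+1))
    exact ⟨1, one_pos, by simp [h3], by simp [h4], by simp [h2], by simp [h1]⟩


theorem continuity_iff_ne_alphaStar {n m r : ℕ} (hrn : r ≤ n)
    (A : Matrix (Fin n) (Fin n) ℝ) (E : Matrix (Fin n) (Fin m) ℝ)
    (X : Set (Fin n → ℝ)) (D : Set (Fin m → ℝ))
    (hA1 : Assumption1 hrn A E X D) (hA2 : Assumption2 hrn A)
    (α : ℝ) (hα : 0 < α) :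
    α ≠ alphaStar A E X D ↔
      ∀ ε : ℝ, 0 < ε → ∃ δ : ℝ, 0 < δ ∧
        Pmin A E X D α ⊆ Pmin A E X D (α + δ) ∧
        Pmin A E X D (α + δ) ⊆ (1 + ε) • Pmin A E X D α ∧
        Pmax A E X D (α + δ) ⊆ Pmax A E X D α ∧
        Pmax A E X D α ⊆ (1 + ε) • Pmax A E X D (α + δ) :=
  continuity_aux hrn A E X D hA1 hA2 α hα

end RPIScaling
end

section
/- Under Assumptions 1 and 2, for every scalar α > 0: ∂P_max^α ∩ ∂𝒳 ≠ ∅ if and only if α ≤ α*, where ∂U denotes the topological boundary (frontier) of a set U ⊆ ℝ^n. -/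
open Matrix Set Pointwise Filter
open scoped NNReal ENNReal Topology

attribute [local instance] Matrix.linftyOpNormedAddCommGroup Matrix.linftyOpNormedRing
  Matrix.linftyOpNormedAlgebra

namespace RPIScaling

lemma spectrum_block_subset {n r : ℕ} (hrn : r ≤ n) (A : Matrix (Fin n) (Fin n) ℝ)
    (h0 : ∀ i j : Fin n, r ≤ (i : ℕ) → (j : ℕ) < r → A i j = 0) :
    spectrum ℂ (A.map (algebraMap ℝ ℂ)) ⊆
      spectrum ℂ ((blockA11 hrn A).map (algebraMap ℝ ℂ)) ∪
      spectrum ℂ ((blockA22 r A).map (algebraMap ℝ ℂ)) := by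
  intro μ hμ
  set e : Fin r ⊕ Fin (n - r) ≃ Fin n :=
    finSumFinEquiv.trans (finCongr (Nat.add_sub_cancel' hrn)) with he
  have hc1 : ∀ i : Fin r, e (Sum.inl i) = Fin.castLE hrn i := by
    intro i; apply Fin.ext; simp [he]
  have hc2 : ∀ i : Fin (n - r), e (Sum.inr i) =
      (⟨r + i.1, by have h := i.2; omega⟩ : Fin n) := by
    intro i; apply Fin.ext; simp [he]
  have mem_det : ∀ (p : ℕ) (M : Matrix (Fin p) (Fin p) ℂ) (ν : ℂ),
      ν ∈ spectrum ℂ M ↔ (algebraMap ℂ _ ν - M).det = 0 := by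
    intro p M ν
    rw [spectrum.mem_iff, Matrix.isUnit_iff_isUnit_det, isUnit_iff_ne_zero, not_ne_iff]
  rw [mem_det] at hμ
  set Ac := A.map (algebraMap ℝ ℂ) with hAc
  set S := algebraMap ℂ (Matrix (Fin n) (Fin n) ℂ) μ - Ac with hS
  have hsub : S.submatrix e e =
      fromBlocks
        (algebraMap ℂ _ μ - (blockA11 hrn A).map (algebraMap ℝ ℂ))
        (-(Ac.submatrix (fun i => e (Sum.inl i)) (fun j => e (Sum.inr j))))
        0
        (algebraMap ℂ _ μ - (blockA22 r A).map (algebraMap ℝ ℂ)) := by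
    ext i j
    cases i with
    | inl i => cases j with
      | inl j =>
        simp only [submatrix_apply, fromBlocks_apply₁₁, hS, Matrix.sub_apply,
          Matrix.algebraMap_matrix_apply, Matrix.map_apply, blockA11, hc1,
          Fin.castLE_inj, submatrix_apply, hAc]
      | inr j =>
        simp only [submatrix_apply, fromBlocks_apply₁₂, hS, Matrix.sub_apply,
          Matrix.algebraMap_matrix_apply, Matrix.map_apply, Matrix.neg_apply, hc1, hc2]
        rw [if_neg (by simp [Fin.ext_iff]; omega)]
        ring
    | inr i => cases j with
      | inl j =>
        simp only [submatrix_apply, fromBlocks_apply₂₁, hS, Matrix.sub_apply,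
          Matrix.algebraMap_matrix_apply, Matrix.map_apply, Matrix.zero_apply, hc1, hc2,
          hAc]
        rw [if_neg (by simp [Fin.ext_iff]; omega),
          h0 _ _ (by simp) (by simpa using j.is_lt)]
        simp
      | inr j =>
        simp only [submatrix_apply, fromBlocks_apply₂₂, hS, Matrix.sub_apply,
          Matrix.algebraMap_matrix_apply, Matrix.map_apply, blockA22, hc2,
          submatrix_apply, hAc]
        by_cases hij : i = j
        · subst hij; simp
        · rw [if_neg (by simp [Fin.ext_iff]; omega), if_neg hij]
  have hdet : S.det = 0 := hμ
  rw [← Matrix.det_submatrix_equiv_self e S, hsub, Matrix.det_fromBlocks_zero₂₁] at hdet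
  rcases mul_eq_zero.mp hdet with h | h
  · left; rw [mem_det]; exact h
  · right; rw [mem_det]; exact h


/-- Geometric decay of powers for real vectors. -/
lemma exists_geom_bound {n : ℕ} (hn : 0 < n) (A : Matrix (Fin n) (Fin n) ℝ)
    (h : ∀ μ ∈ spectrum ℂ (A.map (algebraMap ℝ ℂ)), ‖μ‖ < 1) :
    ∃ C t : ℝ, 0 < C ∧ 0 < t ∧ t < 1 ∧
      ∀ (k : ℕ) (x : Fin n → ℝ), ‖(A ^ k).mulVec x‖ ≤ C * t ^ k * ‖x‖ := by
  haveI : NeZero n := ⟨hn.ne'⟩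
  set M : Matrix (Fin n) (Fin n) ℂ := A.map (algebraMap ℝ ℂ) with hM
  have hcs : CompleteSpace (Matrix (Fin n) (Fin n) ℂ) := FiniteDimensional.complete ℂ _
  have hne : (spectrum ℂ M).Nonempty := spectrum.nonempty M
  have hlt : spectralRadius ℂ M < ((1 : ℝ≥0) : ℝ≥0∞) :=
    spectrum.spectralRadius_lt_of_forall_lt_of_nonempty hne
      (fun k hk => by rw [← NNReal.coe_lt_coe]; push_cast;
                      simpa using h k hk)
  obtain ⟨t, ht1, ht2⟩ := ENNReal.lt_iff_exists_nnreal_btwn.mp (by simpa using hlt)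
  have ht2' : (t : ℝ) < 1 := by exact_mod_cast ht2
  have ht0e : (0 : ℝ≥0∞) < (t : ℝ≥0∞) := zero_le.trans_lt ht1
  have ht0 : (0:ℝ) < (t:ℝ) := by exact_mod_cast ht0e
  have hgel := spectrum.pow_nnnorm_pow_one_div_tendsto_nhds_spectralRadius M
  have hev : ∀ᶠ k : ℕ in atTop, (‖M ^ k‖₊ : ℝ≥0∞) ^ (1 / (k:ℝ)) < (t : ℝ≥0∞) :=
    hgel.eventually_lt_const ht1
  have hev2 : ∀ᶠ k : ℕ in atTop, ‖M ^ k‖ ≤ (t:ℝ) ^ k := by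
    filter_upwards [hev, eventually_ge_atTop 1] with k hk hk1
    have hk0 : (k : ℝ) ≠ 0 := by positivity
    have h2 := ENNReal.rpow_le_rpow hk.le (by positivity : (0:ℝ) ≤ (k:ℝ))
    rw [← ENNReal.rpow_mul, one_div, inv_mul_cancel₀ hk0, ENNReal.rpow_one,
      ENNReal.rpow_natCast] at h2
    have h3 : ‖M ^ k‖₊ ≤ t ^ k := by exact_mod_cast h2
    calc ‖M ^ k‖ = ((‖M ^ k‖₊ : ℝ≥0) : ℝ) := rfl
    _ ≤ ((t ^ k : ℝ≥0) : ℝ) := by exact_mod_cast h3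
    _ = (t:ℝ) ^ k := by push_cast; ring
  obtain ⟨N, hN⟩ := hev2.exists_forall_of_atTop
  classical
  have hS : (0:ℝ) ≤ ∑ k ∈ Finset.range N, ‖M ^ k‖ / (t:ℝ) ^ k :=
    Finset.sum_nonneg fun k _ => by positivity
  set C : ℝ := 1 + ∑ k ∈ Finset.range N, ‖M ^ k‖ / (t:ℝ) ^ k with hCdef
  have hC1 : (1:ℝ) ≤ C := by rw [hCdef]; linarith
  have hCnorm : ∀ k : ℕ, ‖M ^ k‖ ≤ C * (t:ℝ) ^ k := by
    intro k
    by_cases hkN : N ≤ k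
    · calc ‖M ^ k‖ ≤ (t:ℝ) ^ k := hN k hkN
      _ = 1 * (t:ℝ)^k := (one_mul _).symm
      _ ≤ _ := mul_le_mul_of_nonneg_right hC1 (by positivity)
    · push_neg at hkN
      have h1 : ‖M ^ k‖ / (t:ℝ) ^ k ≤ C := by
        have : ‖M ^ k‖ / (t:ℝ) ^ k ≤ ∑ j ∈ Finset.range N, ‖M ^ j‖ / (t:ℝ) ^ j :=
          Finset.single_le_sum (f := fun j => ‖M ^ j‖ / (t:ℝ) ^ j)
            (fun j _ => by positivity) (Finset.mem_range.mpr hkN)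
        rw [hCdef]; linarith
      calc ‖M ^ k‖ = (‖M ^ k‖ / (t:ℝ)^k) * (t:ℝ)^k := by field_simp
      _ ≤ _ := mul_le_mul_of_nonneg_right h1 (by positivity)
  refine ⟨C, t, by linarith, ht0, ht2', fun k x => ?_⟩
  -- complexify
  set xc : Fin n → ℂ := fun i => (x i : ℂ) with hxc
  have hMk : M ^ k = (A ^ k).map (algebraMap ℝ ℂ) := by
    rw [hM]
    simp only [← RingHom.mapMatrix_apply, ← map_pow]
  have hvec : (M ^ k).mulVec xc = fun i => (((A ^ k).mulVec x i : ℝ) : ℂ) := by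
    funext i
    rw [hMk]
    simp only [Matrix.mulVec, dotProduct, Matrix.map_apply, hxc]
    push_cast
    rfl
  have hnorm_xc : ‖xc‖ = ‖x‖ := by
    simp only [hxc]
    rw [Pi.norm_def, Pi.norm_def]
    congr 1
    apply Finset.sup_congr rfl
    intro i _
    simp [nnnorm]
  have hnorm_res : ‖(M ^ k).mulVec xc‖ = ‖(A ^ k).mulVec x‖ := by
    rw [hvec, Pi.norm_def, Pi.norm_def]
    congr 1
    apply Finset.sup_congr rfl
    intro i _
    simp [nnnorm]
  calc ‖(A ^ k).mulVec x‖ = ‖(M ^ k).mulVec xc‖ := hnorm_res.symm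
  _ ≤ ‖M ^ k‖ * ‖xc‖ := Matrix.linfty_opNorm_mulVec _ _
  _ ≤ (C * (t:ℝ) ^ k) * ‖x‖ := by
      rw [hnorm_xc]
      exact mul_le_mul_of_nonneg_right (hCnorm k) (norm_nonneg _)


variable {n m : ℕ} {A : Matrix (Fin n) (Fin n) ℝ} {E : Matrix (Fin n) (Fin m) ℝ}
  {X : Set (Fin n → ℝ)} {D : Set (Fin m → ℝ)} {α : ℝ}

lemma rseq_zero : Rseq A E D α 0 = {0} := rfl

lemma rseq_succ (k : ℕ) :
    Rseq A E D α (k + 1) = A.mulVec '' (Rseq A E D α k) + E.mulVec '' (α • D) := rfl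

lemma mem_rseq_succ_s13 {x d : _} {k : ℕ} (hx : x ∈ Rseq A E D α k) (hd : d ∈ α • D) :
    A.mulVec x + E.mulVec d ∈ Rseq A E D α (k + 1) :=
  Set.add_mem_add ⟨x, hx, rfl⟩ ⟨d, hd, rfl⟩

lemma zero_mem_rseq (hD0 : (0 : Fin m → ℝ) ∈ D) : ∀ k, (0 : Fin n → ℝ) ∈ Rseq A E D α k
  | 0 => rfl
  | k + 1 => by
    have := mem_rseq_succ_s13 (zero_mem_rseq hD0 k) (⟨0, hD0, smul_zero α⟩ : (0:Fin m → ℝ) ∈ α • D)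
    simpa [Matrix.mulVec_zero] using this

lemma rseq_mono (hD0 : (0 : Fin m → ℝ) ∈ D) :
    ∀ k, Rseq A E D α k ⊆ Rseq A E D α (k + 1)
  | 0 => by
    intro x hx
    rw [rseq_zero, Set.mem_singleton_iff] at hx
    subst hx
    exact zero_mem_rseq hD0 1
  | k + 1 =>
    Set.add_subset_add (Set.image_mono (rseq_mono hD0 k)) Subset.rfl

lemma rseq_le (hD0 : (0 : Fin m → ℝ) ∈ D) {j k : ℕ} (h : j ≤ k) :
    Rseq A E D α j ⊆ Rseq A E D α k := by
  induction k with
  | zero => simpa [Nat.le_zero.mp h]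
  | succ k ih =>
    rcases Nat.lt_or_ge j (k+1) with h' | h'
    · exact (ih (Nat.lt_succ_iff.mp h')).trans (rseq_mono hD0 k)
    · have : j = k + 1 := le_antisymm h h'
      subst this; exact Subset.rfl

lemma rseq_absorb {P : Set (Fin n → ℝ)} (hP : IsRPI A E X D α P) {x₀ : Fin n → ℝ}
    (hx₀ : x₀ ∈ P) : ∀ k, ∀ y ∈ Rseq A E D α k, (A ^ k).mulVec x₀ + y ∈ P
  | 0 => by
    intro y hy
    rw [rseq_zero, Set.mem_singleton_iff] at hy
    subst hy
    simpa [Matrix.one_mulVec] using hx₀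
  | k + 1 => by
    intro y hy
    obtain ⟨a, ⟨z, hz, rfl⟩, b, ⟨w, hw, rfl⟩, rfl⟩ := Set.mem_add.mp hy
    have hmem := hP.2 _ (rseq_absorb hP hx₀ k z hz) w hw
    have heq : A.mulVec ((A ^ k).mulVec x₀ + z) + E.mulVec w
        = (A ^ (k+1)).mulVec x₀ + (A.mulVec z + E.mulVec w) := by
      rw [Matrix.mulVec_add, Matrix.mulVec_mulVec, ← pow_succ']
      abel
    rwa [heq] at hmem

lemma rseq_scale (hα : 0 < α) : ∀ k, Rseq A E D α k = α • Rseq A E D 1 k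
  | 0 => by rw [rseq_zero, rseq_zero, Set.smul_set_singleton, smul_zero]
  | k + 1 => by
    ext y
    constructor
    · rintro hy
      obtain ⟨a, ⟨z, hz, rfl⟩, b, ⟨w, ⟨d₀, hd₀, rfl⟩, rfl⟩, rfl⟩ := Set.mem_add.mp hy
      rw [rseq_scale hα k] at hz
      obtain ⟨z', hz', rfl⟩ := hz
      refine ⟨A.mulVec z' + E.mulVec d₀, mem_rseq_succ_s13 hz' ⟨d₀, hd₀, one_smul _ _⟩, ?_⟩
      simp only [smul_add, Matrix.mulVec_smul]
    · rintro ⟨v, hv, rfl⟩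
      obtain ⟨a, ⟨z', hz', rfl⟩, b, ⟨w, ⟨d₀, hd₀, rfl⟩, rfl⟩, rfl⟩ := Set.mem_add.mp hv
      have hz : α • z' ∈ Rseq A E D α k := by
        rw [rseq_scale hα k]; exact ⟨z', hz', rfl⟩
      have := mem_rseq_succ_s13 (A := A) (E := E) hz
        (⟨d₀, hd₀, rfl⟩ : α • d₀ ∈ α • D)
      simpa [smul_add, Matrix.mulVec_smul] using this

lemma rinf_scale (hα : 0 < α) : Rinf A E D α = α • Rinf A E D 1 := by
  ext y
  simp only [Rinf, Set.mem_iUnion, Set.mem_smul_set]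
  constructor
  · rintro ⟨k, hk⟩
    rw [rseq_scale hα k] at hk
    obtain ⟨z, hz, rfl⟩ := hk
    exact ⟨z, ⟨k, hz⟩, rfl⟩
  · rintro ⟨z, ⟨k, hz⟩, rfl⟩
    exact ⟨k, by rw [rseq_scale hα k]; exact ⟨z, hz, rfl⟩⟩

lemma smul_subset_of_le (hDconv : Convex ℝ D) (hD0 : (0 : Fin m → ℝ) ∈ D) {γ β : ℝ}
    (hγ : 0 ≤ γ) (hγβ : γ ≤ β) (hβ : 0 < β) : γ • D ⊆ β • D := by
  rintro _ ⟨d, hd, rfl⟩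
  refine ⟨(γ / β) • d, ?_, ?_⟩
  · have h01 : 0 ≤ γ / β := div_nonneg hγ hβ.le
    have h02 : γ / β ≤ 1 := (div_le_one hβ).mpr hγβ
    have := hDconv hD0 hd (by linarith : (0:ℝ) ≤ 1 - γ/β) h01 (by ring)
    simpa using this
  · show β • ((γ / β) • d) = γ • d
    rw [smul_smul, mul_comm, div_mul_cancel₀ _ hβ.ne']

lemma rseq_scale_mono (hDconv : Convex ℝ D) (hD0 : (0 : Fin m → ℝ) ∈ D) {γ β : ℝ}
    (hγ : 0 ≤ γ) (hγβ : γ ≤ β) (hβ : 0 < β) :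
    ∀ k, Rseq A E D γ k ⊆ Rseq A E D β k
  | 0 => Subset.rfl
  | k + 1 =>
    Set.add_subset_add (Set.image_mono (rseq_scale_mono hDconv hD0 hγ hγβ hβ k))
      (Set.image_mono (smul_subset_of_le hDconv hD0 hγ hγβ hβ))

lemma rinf_invariant {x d : _} (hx : x ∈ Rinf A E D α) (hd : d ∈ α • D) :
    A.mulVec x + E.mulVec d ∈ Rinf A E D α := by
  obtain ⟨k, hk⟩ := Set.mem_iUnion.mp hx
  exact Set.mem_iUnion.mpr ⟨k + 1, mem_rseq_succ_s13 hk hd⟩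

lemma closure_RPI (hXc : IsClosed X) {S : Set (Fin n → ℝ)} (hsub : S ⊆ X)
    (hinv : ∀ x ∈ S, ∀ d ∈ α • D, A.mulVec x + E.mulVec d ∈ S) :
    IsRPI A E X D α (closure S) := by
  constructor
  · exact closure_minimal hsub hXc
  · intro x hx d hd
    have hcont : Continuous fun y : Fin n → ℝ => A.mulVec y + E.mulVec d := by
      have h1 : Continuous fun y : Fin n → ℝ => A.mulVec y := by
        have := (LinearMap.toContinuousLinearMap (Matrix.mulVecLin A)).continuous
        exact this
      exact h1.add continuous_const
    have h2 : (fun y : Fin n → ℝ => A.mulVec y + E.mulVec d) '' S ⊆ S := by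
      rintro _ ⟨z, hz, rfl⟩; exact hinv z hz d hd
    have h3 : (fun y : Fin n → ℝ => A.mulVec y + E.mulVec d) '' closure S ⊆
        closure ((fun y : Fin n → ℝ => A.mulVec y + E.mulVec d) '' S) :=
      image_closure_subset_closure_image hcont
    exact closure_mono h2 (h3 ⟨x, hx, rfl⟩)

lemma pmax_isRPI : IsRPI A E X D α (Pmax A E X D α) := by
  constructor
  · exact Set.sUnion_subset fun P hP => hP.1
  · rintro x ⟨P, hP, hxP⟩ d hd
    exact ⟨P, hP, hP.2 x hxP d hd⟩

lemma subset_pmax {P : Set (Fin n → ℝ)} (hP : IsRPI A E X D α P) : P ⊆ Pmax A E X D α :=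
  Set.subset_sUnion_of_mem hP

lemma pmax_closed (hXc : IsClosed X) : IsClosed (Pmax A E X D α) :=
  isClosed_of_closure_subset
    (subset_pmax (closure_RPI hXc pmax_isRPI.1 pmax_isRPI.2))

lemma smul_RPI (hDconv : Convex ℝ D) (hD0 : (0 : Fin m → ℝ) ∈ D) (hα : 0 < α)
    {P : Set (Fin n → ℝ)} (hP : IsRPI A E X D α P) {c : ℝ} (hc : 1 ≤ c)
    (hsub : c • P ⊆ X) : IsRPI A E X D α (c • P) := by
  have hc0 : 0 < c := lt_of_lt_of_le one_pos hc
  refine ⟨hsub, ?_⟩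
  rintro _ ⟨x, hx, rfl⟩ d hd
  obtain ⟨d₀, hd₀, rfl⟩ := hd
  have hd' : α • (c⁻¹ • d₀) ∈ α • D := by
    refine ⟨c⁻¹ • d₀, ?_, rfl⟩
    have h01 : (0:ℝ) ≤ c⁻¹ := by positivity
    have h02 : c⁻¹ ≤ 1 := inv_le_one_of_one_le₀ hc
    have := hDconv hD0 hd₀ (by linarith : (0:ℝ) ≤ 1 - c⁻¹) h01 (by ring)
    simpa using this
  have hmem := hP.2 x hx _ hd'
  refine ⟨A.mulVec x + E.mulVec (α • (c⁻¹ • d₀)), hmem, ?_⟩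
  simp only [smul_add, Matrix.mulVec_smul]
  congr 1
  rw [smul_comm c α, smul_smul c c⁻¹, mul_inv_cancel₀ hc0.ne', one_smul]


lemma rinf_one_bound {C t : ℝ} (hC : 0 < C) (ht0 : 0 < t) (ht1 : t < 1)
    (hb : ∀ (k : ℕ) (x : Fin n → ℝ), ‖(A ^ k).mulVec x‖ ≤ C * t ^ k * ‖x‖)
    (hDcomp : IsCompact D) (hD0 : (0 : Fin m → ℝ) ∈ D) :
    ∃ K : ℝ, 0 ≤ K ∧ ∀ y ∈ Rinf A E D 1, ‖y‖ ≤ K := by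
  obtain ⟨DR, hDR⟩ := isBounded_iff_forall_norm_le.mp hDcomp.isBounded
  have hDR0 : 0 ≤ DR := le_trans (by simp) (hDR 0 hD0)
  set f := LinearMap.toContinuousLinearMap (Matrix.mulVecLin E) with hf
  have hfE : ∀ d, f d = E.mulVec d := by intro d; simp [hf]
  set EC := ‖f‖ with hEC
  have hEC0 : 0 ≤ EC := norm_nonneg f
  set K' := EC * DR / (1 - t) with hK'
  have hK'0 : 0 ≤ K' := by
    apply div_nonneg (mul_nonneg hEC0 hDR0); linarith
  have main : ∀ k, ∀ x ∈ Rseq A E D 1 k, ∀ j, ‖(A ^ j).mulVec x‖ ≤ C * t ^ j * K' := by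
    intro k
    induction k with
    | zero =>
      intro x hx j
      rw [rseq_zero, Set.mem_singleton_iff] at hx
      subst hx
      rw [Matrix.mulVec_zero, norm_zero]
      positivity
    | succ k ih =>
      intro x hx j
      obtain ⟨a, ⟨z, hz, rfl⟩, b, ⟨w, hw, rfl⟩, rfl⟩ := Set.mem_add.mp hx
      obtain ⟨d₀, hd₀, rfl⟩ := hw
      have hw_norm : ‖(1:ℝ) • d₀‖ ≤ DR := by rw [one_smul]; exact hDR d₀ hd₀
      have heq : (A ^ j).mulVec (A.mulVec z + E.mulVec ((1:ℝ) • d₀))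
          = (A ^ (j+1)).mulVec z + (A ^ j).mulVec (E.mulVec ((1:ℝ) • d₀)) := by
        rw [Matrix.mulVec_add, Matrix.mulVec_mulVec, ← pow_succ]
      rw [heq]
      have h1 := ih z hz (j + 1)
      have h2 : ‖(A ^ j).mulVec (E.mulVec ((1:ℝ) • d₀))‖ ≤ C * t ^ j * (EC * DR) := by
        calc ‖(A ^ j).mulVec (E.mulVec ((1:ℝ) • d₀))‖
            ≤ C * t ^ j * ‖E.mulVec ((1:ℝ) • d₀)‖ := hb j _
          _ ≤ C * t ^ j * (EC * DR) := by
              apply mul_le_mul_of_nonneg_left _ (by positivity)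
              rw [← hfE]
              calc ‖f ((1:ℝ) • d₀)‖ ≤ EC * ‖(1:ℝ) • d₀‖ := f.le_opNorm _
                _ ≤ EC * DR := mul_le_mul_of_nonneg_left hw_norm hEC0
      calc ‖(A ^ (j+1)).mulVec z + (A ^ j).mulVec (E.mulVec ((1:ℝ) • d₀))‖
          ≤ ‖(A ^ (j+1)).mulVec z‖ + ‖(A ^ j).mulVec (E.mulVec ((1:ℝ) • d₀))‖ :=
            norm_add_le _ _
        _ ≤ C * t ^ (j+1) * K' + C * t ^ j * (EC * DR) := add_le_add h1 h2
        _ = C * t ^ j * (t * K' + EC * DR) := by ring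
        _ = C * t ^ j * K' := by
            congr 1
            have h1t : (1:ℝ) - t ≠ 0 := by linarith
            rw [hK']
            field_simp
            ring
  refine ⟨C * K', by positivity, ?_⟩
  intro y hy
  obtain ⟨k, hk⟩ := Set.mem_iUnion.mp hy
  have := main k y hk 0
  simpa [Matrix.one_mulVec] using this

lemma rinf_subset_X_of_RPI {C t : ℝ} (ht0 : 0 < t) (ht1 : t < 1)
    (hb : ∀ (k : ℕ) (x : Fin n → ℝ), ‖(A ^ k).mulVec x‖ ≤ C * t ^ k * ‖x‖)
    (hXc : IsClosed X) (hD0 : (0 : Fin m → ℝ) ∈ D)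
    {P : Set (Fin n → ℝ)} (hP : IsRPI A E X D α P) (hPne : P.Nonempty) :
    Rinf A E D α ⊆ X := by
  obtain ⟨x₀, hx₀⟩ := hPne
  intro y hy
  obtain ⟨j, hj⟩ := Set.mem_iUnion.mp hy
  have htend : Tendsto (fun k : ℕ => (A ^ k).mulVec x₀ + y) atTop (𝓝 y) := by
    have h0 : Tendsto (fun k : ℕ => (A ^ k).mulVec x₀) atTop (𝓝 0) := by
      rw [tendsto_zero_iff_norm_tendsto_zero]
      apply squeeze_zero (fun k => norm_nonneg _) (fun k => hb k x₀)
      have : Tendsto (fun k : ℕ => t ^ k) atTop (𝓝 0) :=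
        tendsto_pow_atTop_nhds_zero_of_lt_one ht0.le ht1
      have h2 := this.const_mul C
      rw [mul_zero] at h2
      have h3 := h2.mul_const ‖x₀‖
      rw [zero_mul] at h3
      exact h3
    have := h0.add (tendsto_const_nhds (x := y))
    simpa using this
  refine hXc.mem_of_tendsto htend ?_
  filter_upwards [eventually_ge_atTop j] with k hk
  exact hP.1 (rseq_absorb hP hx₀ k y (rseq_le hD0 hk hj))



lemma exists_nonzero_rinf_one {r : ℕ} (hrn : r ≤ n) (hr : 0 < r)
    (hctrl : (controllabilityMatrix hrn A E).rank = r)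
    (hD0i : (0 : Fin m → ℝ) ∈ interior D) :
    ∃ y ∈ Rinf A E D 1, y ≠ 0 := by
  have hE1 : blockE1 hrn E ≠ 0 := by
    intro h
    have hzero : controllabilityMatrix hrn A E = 0 := by
      ext i p
      simp [controllabilityMatrix, h]
    rw [hzero, Matrix.rank_zero] at hctrl
    omega
  have hex : ∃ i j, blockE1 hrn E i j ≠ 0 := by
    by_contra h
    push_neg at h
    exact hE1 (by ext i j; simpa using h i j)
  obtain ⟨i, j, hij⟩ := hex
  obtain ⟨ε, hε, hball⟩ := Metric.mem_nhds_iff.mp (mem_interior_iff_mem_nhds.mp hD0i)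
  set d₀ : Fin m → ℝ := Pi.single j (ε/2) with hd₀
  have hd₀D : d₀ ∈ D := by
    apply hball
    rw [Metric.mem_ball, dist_zero_right]
    have hnorm : ‖d₀‖ ≤ ε/2 := by
      refine (pi_norm_le_iff_of_nonneg (by positivity)).mpr fun b => ?_
      rcases eq_or_ne b j with rfl | hbj
      · rw [hd₀, Pi.single_eq_same, Real.norm_eq_abs, abs_of_pos (by positivity : (0:ℝ) < ε/2)]
      · simp [hd₀, Pi.single_eq_of_ne hbj]
        positivity
    linarith
  refine ⟨E.mulVec d₀, ?_, ?_⟩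
  · apply Set.mem_iUnion.mpr ⟨1, ?_⟩
    have h0 : (0 : Fin n → ℝ) ∈ Rseq A E D 1 0 := rfl
    have := mem_rseq_succ_s13 (A := A) h0 (⟨d₀, hd₀D, one_smul _ _⟩ : d₀ ∈ (1:ℝ) • D)
    simpa [Matrix.mulVec_zero] using this
  · intro h
    have h2 : (E *ᵥ d₀) (Fin.castLE hrn i) = 0 := by rw [h]; rfl
    rw [hd₀] at h2
    simp only [Matrix.mulVec_single] at h2
    have hEij : E (Fin.castLE hrn i) j ≠ 0 := by simpa [blockE1] using hij
    exact (mul_ne_zero hEij (by positivity : (ε/2:ℝ) ≠ 0)) h2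


theorem pmax_boundary_contact_iff_le_alphaStar {n m r : ℕ} (hrn : r ≤ n)
    (A : Matrix (Fin n) (Fin n) ℝ) (E : Matrix (Fin n) (Fin m) ℝ)
    (X : Set (Fin n → ℝ)) (D : Set (Fin m → ℝ))
    (hA1 : Assumption1 hrn A E X D) (hA2 : Assumption2 hrn A)
    (α : ℝ) (hα : 0 < α) :
    (frontier (Pmax A E X D α) ∩ frontier X).Nonempty ↔ α ≤ alphaStar A E X D := by
  classical
  have hXcomp := hA1.hX.2.1
  have hX0 := hA1.hX.2.2
  have hXc : IsClosed X := hXcomp.isClosed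
  have hDconv := hA1.hD.1
  have hDcomp := hA1.hD.2.1
  have hD0i := hA1.hD.2.2
  have hD0 : (0 : Fin m → ℝ) ∈ D := interior_subset hD0i
  have hX0' : (0 : Fin n → ℝ) ∈ X := interior_subset hX0
  have hspec : ∀ μ ∈ spectrum ℂ (A.map (algebraMap ℝ ℂ)), ‖μ‖ < 1 := by
    intro μ hμ
    rcases spectrum_block_subset hrn A hA1.lowerLeftA hμ with h | h
    · exact hA2.1 μ h
    · exact hA2.2 μ h
  obtain ⟨C, t, hC, ht0, ht1, hb⟩ := exists_geom_bound hA1.hn A hspec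
  obtain ⟨RX, hRX⟩ := isBounded_iff_forall_norm_le.mp hXcomp.isBounded
  have hRX0 : 0 ≤ RX := le_trans (by simp) (hRX 0 hX0')
  obtain ⟨K, hK0, hKb⟩ := rinf_one_bound hC ht0 ht1 hb hDcomp hD0
  obtain ⟨y₁, hy₁mem, hy₁0⟩ := exists_nonzero_rinf_one hrn hA1.hr hA1.controllable hD0i
  have hy₁pos : 0 < ‖y₁‖ := norm_pos_iff.mpr hy₁0
  set T : Set ℝ := {β : ℝ | 0 < β ∧ Rinf A E D β ⊆ X} with hT
  obtain ⟨ε, hε, hball⟩ := Metric.mem_nhds_iff.mp (mem_interior_iff_mem_nhds.mp hX0)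
  have hT1 : (ε / (2 * (K + 1))) ∈ T := by
    constructor
    · positivity
    · intro y hy
      rw [rinf_scale (by positivity)] at hy
      obtain ⟨y', hy', rfl⟩ := hy
      apply hball
      rw [Metric.mem_ball, dist_zero_right, norm_smul, Real.norm_eq_abs,
        abs_of_pos (by positivity)]
      have h1 := hKb y' hy'
      calc ε / (2 * (K + 1)) * ‖y'‖ ≤ ε / (2 * (K + 1)) * K :=
            mul_le_mul_of_nonneg_left h1 (by positivity)
        _ < ε := by
            rw [div_mul_eq_mul_div, div_lt_iff₀ (by positivity)]
            nlinarith
  have hTne : T.Nonempty := ⟨_, hT1⟩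
  have hTbdd : BddAbove T := by
    refine ⟨RX / ‖y₁‖, fun β hβ => ?_⟩
    have hmem : β • y₁ ∈ X := hβ.2 (by rw [rinf_scale hβ.1]; exact ⟨y₁, hy₁mem, rfl⟩)
    have h2 := hRX _ hmem
    rw [norm_smul, Real.norm_eq_abs, abs_of_pos hβ.1] at h2
    rw [le_div_iff₀ hy₁pos]
    exact h2
  have halpha : alphaStar A E X D = sSup T := rfl
  have hsup_mem : sSup T ∈ T := by
    have hpos : 0 < sSup T := lt_of_lt_of_le hT1.1 (le_csSup hTbdd hT1)
    refine ⟨hpos, ?_⟩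
    intro y hy
    rw [rinf_scale hpos] at hy
    obtain ⟨y', hy', rfl⟩ := hy
    have hcl : IsClosed {β : ℝ | β • y' ∈ X} :=
      hXc.preimage (continuous_id.smul continuous_const)
    have hsubF : T ⊆ {β : ℝ | β • y' ∈ X} := fun β hβ =>
      hβ.2 (by rw [rinf_scale hβ.1]; exact ⟨y', hy', rfl⟩)
    have hmemcl := csSup_mem_closure hTne hTbdd
    have h2 : closure T ⊆ {β : ℝ | β • y' ∈ X} := by
      rw [← hcl.closure_eq]; exact closure_mono hsubF
    exact h2 hmemcl
  have key : α ≤ alphaStar A E X D ↔ Rinf A E D α ⊆ X := by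
    rw [halpha]
    constructor
    · intro hle
      have hsub2 : Rinf A E D α ⊆ Rinf A E D (sSup T) := by
        intro y hy
        obtain ⟨k, hk⟩ := Set.mem_iUnion.mp hy
        exact Set.mem_iUnion.mpr
          ⟨k, rseq_scale_mono hDconv hD0 hα.le hle hsup_mem.1 k hk⟩
      exact hsub2.trans hsup_mem.2
    · intro hc
      exact le_csSup hTbdd ⟨hα, hc⟩
  rw [key]
  constructor
  · rintro ⟨x, hx1, hx2⟩
    by_contra hnc
    have hemp : Pmax A E X D α = ∅ := by
      rw [Set.eq_empty_iff_forall_notMem]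
      intro z hz
      obtain ⟨P, hP, hzP⟩ := hz
      exact hnc (rinf_subset_X_of_RPI ht0 ht1 hb hXc hD0 hP ⟨z, hzP⟩)
    rw [hemp] at hx1
    simp at hx1
  · intro hc
    have hRPIcl : IsRPI A E X D α (closure (Rinf A E D α)) :=
      closure_RPI hXc hc (fun x hx d hd => rinf_invariant hx hd)
    have hyα : α • y₁ ∈ Pmax A E X D α := by
      apply subset_pmax hRPIcl
      apply subset_closure
      rw [rinf_scale hα]
      exact ⟨y₁, hy₁mem, rfl⟩
    have hyα0 : α • y₁ ≠ 0 := smul_ne_zero hα.ne' hy₁0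
    have hPcl : IsClosed (Pmax A E X D α) := pmax_closed hXc
    have hPsub : Pmax A E X D α ⊆ X := pmax_isRPI.1
    have hPcomp : IsCompact (Pmax A E X D α) := hXcomp.of_isClosed_subset hPcl hPsub
    by_contra hfr
    rw [Set.not_nonempty_iff_eq_empty] at hfr
    have hsubint : Pmax A E X D α ⊆ interior X := by
      intro x hx
      by_contra hxint
      have hxfX : x ∈ frontier X := by
        rw [hXc.frontier_eq]; exact ⟨hPsub hx, hxint⟩
      have hxfP : x ∈ frontier (Pmax A E X D α) := by
        rw [hPcl.frontier_eq]
        exact ⟨hx, fun hint => hxint (interior_mono hPsub hint)⟩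
      exact absurd hfr (Set.nonempty_iff_ne_empty.mp ⟨x, hxfP, hxfX⟩)
    obtain ⟨δ, hδ, hthick⟩ := hPcomp.exists_thickening_subset_open isOpen_interior hsubint
    set c : ℝ := 1 + δ / (2 * (RX + 1)) with hcdef
    have hc1' : c - 1 = δ / (2 * (RX + 1)) := by rw [hcdef]; ring
    have hc1 : 1 < c := by
      have h0 : 0 < δ / (2 * (RX + 1)) := by positivity
      rw [hcdef]
      linarith
    have hcsub : c • Pmax A E X D α ⊆ X := by
      rintro _ ⟨x, hx, rfl⟩
      have hxX : x ∈ X := hPsub hx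
      have hxn : ‖x‖ ≤ RX := hRX x hxX
      have hdist : dist (c • x) x < δ := by
        rw [dist_eq_norm]
        have heq2 : c • x - x = (c - 1) • x := by rw [sub_smul, one_smul]
        rw [heq2, norm_smul, Real.norm_eq_abs, abs_of_pos (by linarith : (0:ℝ) < c - 1),
          hc1', div_mul_eq_mul_div, div_lt_iff₀ (by positivity)]
        nlinarith [norm_nonneg x]
      have hmem2 : c • x ∈ Metric.thickening δ (Pmax A E X D α) :=
        Metric.mem_thickening_iff.mpr ⟨x, hx, hdist⟩
      exact interior_subset (hthick hmem2)
    have hcRPI : IsRPI A E X D α (c • Pmax A E X D α) :=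
      smul_RPI hDconv hD0 hα pmax_isRPI hc1.le hcsub
    have hcsubP : c • Pmax A E X D α ⊆ Pmax A E X D α := subset_pmax hcRPI
    have hiter : ∀ k : ℕ, c ^ k • (α • y₁) ∈ Pmax A E X D α := by
      intro k
      induction k with
      | zero => simpa using hyα
      | succ k ih =>
        have hmem3 : c • (c ^ k • (α • y₁)) ∈ c • Pmax A E X D α := ⟨_, ih, rfl⟩
        have h2 := hcsubP hmem3
        rwa [smul_smul, ← pow_succ'] at h2
    obtain ⟨k, hk⟩ := pow_unbounded_of_one_lt (RX / ‖α • y₁‖) hc1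
    have h3 := hRX _ (hPsub (hiter k))
    have hc0 : (0:ℝ) < c := by linarith
    rw [norm_smul (c^k), Real.norm_eq_abs, abs_of_pos (pow_pos hc0 k)] at h3
    have hyn : 0 < ‖α • y₁‖ := norm_pos_iff.mpr hyα0
    rw [div_lt_iff₀ hyn] at hk
    linarith


end RPIScaling
end

section
/- Under Assumptions 1 and 2', for every scalar α > 0, every δ > 0, and every k ∈ ℕ, it holds that (α/(α+δ)) • Q_k^{α+δ} ⊆ Q_k^α ⊆ Q_k^{α+δ}. -/
open Matrix Set Pointwise

namespace RPIScaling

theorem qseq_scaling_bounds {n m r : ℕ} (hrn : r ≤ n)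
    (A : Matrix (Fin n) (Fin n) ℝ) (E : Matrix (Fin n) (Fin m) ℝ)
    (X : Set (Fin n → ℝ)) (D : Set (Fin m → ℝ))
    (hA1 : Assumption1 hrn A E X D) (hA2' : Assumption2' r A)
    (α : ℝ) (hα : 0 < α) (δ : ℝ) (hδ : 0 < δ) (k : ℕ) :
    (α / (α + δ)) • Qseq A E X D (α + δ) k ⊆ Qseq A E X D α k ∧
      Qseq A E X D α k ⊆ Qseq A E X D (α + δ) k := by
  have hαδ : 0 < α + δ := by linarith
  set c : ℝ := α / (α + δ) with hcdef
  have hc0 : 0 < c := by positivity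
  have hc1 : c ≤ 1 := by
    rw [hcdef, div_le_one hαδ]; linarith
  have hmul : c * (α + δ) = α := by
    rw [hcdef, div_mul_cancel₀ _ hαδ.ne']
  obtain ⟨hXc, -, hX0⟩ := hA1.hX
  obtain ⟨hDc, -, hD0⟩ := hA1.hD
  have hX0' : (0 : Fin n → ℝ) ∈ X := interior_subset hX0
  have hD0' : (0 : Fin m → ℝ) ∈ D := interior_subset hD0
  have hsmulX : ∀ x ∈ X, c • x ∈ X := by
    intro x hx
    have h := hXc hX0' hx (a := 1 - c) (b := c) (by linarith) hc0.le (by ring)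
    rw [smul_zero, zero_add] at h
    exact h
  have hsmulD : ∀ d ∈ D, c • d ∈ D := by
    intro d hd
    have h := hDc hD0' hd (a := 1 - c) (b := c) (by linarith) hc0.le (by ring)
    rw [smul_zero, zero_add] at h
    exact h
  have hDsub : α • D ⊆ (α + δ) • D := by
    rintro _ ⟨d, hd, rfl⟩
    refine ⟨c • d, hsmulD d hd, ?_⟩
    show (α + δ) • c • d = α • d
    rw [smul_smul, mul_comm, hmul]
  induction k with
  | zero =>
    refine ⟨?_, subset_rfl⟩
    rintro _ ⟨y, hy, rfl⟩
    exact hsmulX y hy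
  | succ k ih =>
    obtain ⟨ih1, ih2⟩ := ih
    constructor
    · rintro _ ⟨y, ⟨hy1, hy2⟩, rfl⟩
      refine ⟨?_, hsmulX y hy2⟩
      rw [Set.mem_preimage, Set.mem_add] at hy1
      obtain ⟨q, hq, z, hz, hsum⟩ := hy1
      rw [Set.mem_neg, Set.mem_image] at hz
      obtain ⟨v, hv, hEv⟩ := hz
      obtain ⟨d, hd, hvd⟩ := hv
      have hgoal : A.mulVec (c • y) ∈ Qseq A E X D α k + -(E.mulVec '' (α • D)) := by
        rw [Set.mem_add]
        refine ⟨c • q, ih1 ⟨q, hq, rfl⟩, c • z, ?_, ?_⟩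
        · rw [Set.mem_neg, Set.mem_image]
          refine ⟨α • d, ⟨d, hd, rfl⟩, ?_⟩
          have hcv : α • d = c • v := by
            rw [← hvd]
            show α • d = c • (α + δ) • d
            rw [smul_smul, hmul]
          rw [hcv, Matrix.mulVec_smul, hEv, smul_neg]
        · rw [Matrix.mulVec_smul, ← hsum]
          module
      exact hgoal
    · rintro x ⟨hx1, hx2⟩
      refine ⟨?_, hx2⟩
      exact Set.add_subset_add ih2 (Set.neg_subset_neg.mpr (Set.image_mono hDsub)) hx1

end RPIScaling
end

section
/- Under Assumptions 1 and 2', for every scalar α > 0 and every ε > 0, there exists δ > 0 such that C_max^α ⊆ C_max^{α+δ} ⊆ (1+ε) • C_max^α, where C_max^β denotes the maximal controlled invariant set for parameter β. -/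
open Matrix Set Pointwise

namespace RPIScaling

lemma smul_set_mono_of_le {m : ℕ} {D : Set (Fin m → ℝ)}
    (hconv : Convex ℝ D) (h0 : (0 : Fin m → ℝ) ∈ D) {a b : ℝ}
    (ha : 0 ≤ a) (hab : a ≤ b) (hb : 0 < b) : a • D ⊆ b • D := by
  intro x hx
  obtain ⟨d, hd, rfl⟩ := hx
  refine ⟨(a / b) • d, ?_, ?_⟩
  · have h1 : (0:ℝ) ≤ a / b := div_nonneg ha hb.le
    have h2 : a / b ≤ 1 := (div_le_one hb).mpr hab
    have := hconv h0 hd (by linarith : (0:ℝ) ≤ 1 - a/b) h1 (by ring)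
    simpa using this
  · show b • (a / b) • d = a • d
    rw [smul_smul]
    congr 1
    field_simp

lemma cmax_mono {n m : ℕ} (A : Matrix (Fin n) (Fin n) ℝ) (E : Matrix (Fin n) (Fin m) ℝ)
    (X : Set (Fin n → ℝ)) (D : Set (Fin m → ℝ)) {α β : ℝ}
    (h : (α • D : Set (Fin m → ℝ)) ⊆ β • D) :
    Cmax A E X D α ⊆ Cmax A E X D β := by
  intro x hx
  obtain ⟨C, hC, hxC⟩ := hx
  refine ⟨C, ⟨hC.1, fun y hy => ?_⟩, hxC⟩
  obtain ⟨d, hd, hmem⟩ := hC.2 y hy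
  exact ⟨d, h hd, hmem⟩

lemma cmax_scale {n m : ℕ} (A : Matrix (Fin n) (Fin n) ℝ) (E : Matrix (Fin n) (Fin m) ℝ)
    (X : Set (Fin n → ℝ)) (D : Set (Fin m → ℝ)) {α c : ℝ}
    (hXconv : Convex ℝ X) (hX0 : (0 : Fin n → ℝ) ∈ X) (hc : 1 ≤ c) :
    Cmax A E X D (c * α) ⊆ c • Cmax A E X D α := by
  have hc0 : 0 < c := lt_of_lt_of_le one_pos hc
  intro x hx
  obtain ⟨C, hC, hxC⟩ := hx
  have hCI : IsCI A E X D α (c⁻¹ • C) := by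
    constructor
    · intro y hy
      obtain ⟨z, hz, rfl⟩ := hy
      have hzX : z ∈ X := hC.1 hz
      have h1 : (0:ℝ) ≤ c⁻¹ := by positivity
      have h2 : c⁻¹ ≤ 1 := by
        rw [inv_le_one_iff₀]; right; exact hc
      have := hXconv hX0 hzX (by linarith : (0:ℝ) ≤ 1 - c⁻¹) h1 (by ring)
      simpa using this
    · intro y hy
      obtain ⟨z, hz, rfl⟩ := hy
      obtain ⟨d, hd, hmem⟩ := hC.2 z hz
      obtain ⟨d₀, hd₀, rfl⟩ := hd
      refine ⟨α • d₀, ⟨d₀, hd₀, rfl⟩, ?_⟩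
      have heq : A.mulVec (c⁻¹ • z) + E.mulVec (α • d₀)
          = c⁻¹ • (A.mulVec z + E.mulVec ((c * α) • d₀)) := by
        have hca : c⁻¹ * (c * α) = α := by field_simp
        simp only [Matrix.mulVec_smul, smul_add, smul_smul, hca]
      rw [heq]
      exact ⟨_, hmem, rfl⟩
  have hsub : c⁻¹ • C ⊆ Cmax A E X D α := fun y hy => ⟨c⁻¹ • C, hCI, hy⟩
  refine ⟨c⁻¹ • x, hsub ⟨x, hxC, rfl⟩, ?_⟩
  show c • c⁻¹ • x = x
  rw [smul_smul, mul_inv_cancel₀ (ne_of_gt hc0), one_smul]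

theorem cmax_continuity {n m r : ℕ} (hrn : r ≤ n)
    (A : Matrix (Fin n) (Fin n) ℝ) (E : Matrix (Fin n) (Fin m) ℝ)
    (X : Set (Fin n → ℝ)) (D : Set (Fin m → ℝ))
    (hA1 : Assumption1 hrn A E X D) (hA2' : Assumption2' r A)
    (α : ℝ) (hα : 0 < α) (ε : ℝ) (hε : 0 < ε) :
    ∃ δ : ℝ, 0 < δ ∧
      Cmax A E X D α ⊆ Cmax A E X D (α + δ) ∧
      Cmax A E X D (α + δ) ⊆ (1 + ε) • Cmax A E X D α := by
  have hDconv : Convex ℝ D := hA1.hD.1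
  have hD0 : (0 : Fin m → ℝ) ∈ D := interior_subset hA1.hD.2.2
  have hXconv : Convex ℝ X := hA1.hX.1
  have hX0 : (0 : Fin n → ℝ) ∈ X := interior_subset hA1.hX.2.2
  refine ⟨ε * α, by positivity, ?_, ?_⟩
  · exact cmax_mono A E X D
      (smul_set_mono_of_le hDconv hD0 hα.le (by nlinarith) (by nlinarith))
  · have heq : α + ε * α = (1 + ε) * α := by ring
    rw [heq]
    exact cmax_scale A E X D hXconv hX0 (by linarith)

end RPIScaling
end
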